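/- For all integers n ≥ 2 and k ≥ n, the total variation distance between the type A affine k-shuffle measure and the cut-then-k-riffle-shuffle measure satisfies ||A_{k,n} − C_{k,n}|| < n·(2n/(e·k))^{n/2}. -/

import Mathlib

/-- Number of descents of a permutation of `{1,...,n}` (here `Fin n`, 0-indexed):
the number of positions `i` with `1 ≤ i ≤ n-1` and `π(i) > π(i+1)`. -/
def numDescents (n : ℕ) (π : Equiv.Perm (Fin n)) : ℕ :=
  ((Finset.range (n - 1)).filter (fun i =>
    ∃ h : i + 1 < n, π ⟨i + 1, h⟩ < π ⟨i, Nat.lt_of_succ_lt h⟩)).card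

/-- `π` has a cyclic descent at `n` if `π(n) > π(1)`. -/
def hasCyclicDescentAtLast (n : ℕ) (π : Equiv.Perm (Fin n)) : Prop :=
  ∃ h : 0 < n, π ⟨0, h⟩ < π ⟨n - 1, Nat.sub_lt h Nat.one_pos⟩

instance (n : ℕ) (π : Equiv.Perm (Fin n)) : Decidable (hasCyclicDescentAtLast n π) :=
  exists_prop_decidable _

/-- Number of cyclic descents: `d(π)+1` if `π` has a cyclic descent at `n`, else `d(π)`. -/
def numCyclicDescents (n : ℕ) (π : Equiv.Perm (Fin n)) : ℕ :=
  numDescents n π + if hasCyclicDescentAtLast n π then 1 else 0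

/-- The k-riffle shuffle measure `R_{k,n}(π) = binom(n+k-d(π)-1, n) / k^n`. -/
noncomputable def riffle (k n : ℕ) (π : Equiv.Perm (Fin n)) : ℝ :=
  (Nat.choose (n + k - numDescents n π - 1) n : ℝ) / (k : ℝ) ^ n

/-- The cut-then-k-riffle-shuffle measure
`C_{k,n}(π) = binom(n+k-cd(π)-1, n-1) / (n·k^(n-1))`. -/
noncomputable def cutRiffle (k n : ℕ) (π : Equiv.Perm (Fin n)) : ℝ :=
  (Nat.choose (n + k - numCyclicDescents n π - 1) (n - 1) : ℝ) / ((n : ℝ) * (k : ℝ) ^ (n - 1))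

/-- The major index of a permutation: the sum of positions `i` (1-indexed, `1 ≤ i ≤ n-1`)
with `π(i) > π(i+1)`. -/
def majorIndex (n : ℕ) (π : Equiv.Perm (Fin n)) : ℕ :=
  ∑ i ∈ (Finset.range (n - 1)).filter (fun i =>
    ∃ h : i + 1 < n, π ⟨i + 1, h⟩ < π ⟨i, Nat.lt_of_succ_lt h⟩), (i + 1)

/-- The Ramanujan sum `C_r(m) = Σ_{1 ≤ l ≤ r, gcd(l,r)=1} exp(2πi·l·m/r)`, a real number. -/
noncomputable def ramanujanSum (r : ℕ) (m : ℤ) : ℝ :=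
  (∑ l ∈ (Finset.Icc 1 r).filter (fun l => Nat.gcd l r = 1),
      Complex.exp (2 * Real.pi * Complex.I * (l : ℂ) * (m : ℂ) / (r : ℂ))).re

/-- The type A affine k-shuffle measure, for `k ≥ n` (so `k - cd(π) > 0` for all `π`):
`A_{k,n}(π) = (1/(n·k^(n-1))) Σ_{r | gcd(n, k-cd(π))} binom((n+k-cd(π)-r)/r, (n-r)/r)·C_r(-maj(π))`. -/
noncomputable def affineShuffle (k n : ℕ) (π : Equiv.Perm (Fin n)) : ℝ :=
  (1 / ((n : ℝ) * (k : ℝ) ^ (n - 1))) *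
    ∑ r ∈ (Nat.gcd n (k - numCyclicDescents n π)).divisors,
      (Nat.choose ((n + k - numCyclicDescents n π - r) / r) ((n - r) / r) : ℝ)
        * ramanujanSum r (-(majorIndex n π : ℤ))


open Finset Nat

/-- `e ≤ ((m+1)/m)^(m+1)` -/
lemma exp_one_le_pow_succ (m : ℕ) (hm : 1 ≤ m) :
    Real.exp 1 ≤ (((m : ℝ) + 1) / m) ^ (m + 1) := by
  have hm0 : (0:ℝ) < m := by exact_mod_cast hm
  set t : ℝ := 1 / ((m:ℝ) + 1) with ht
  have hE := Real.exp_pos t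
  have h2 := Real.add_one_le_exp (-t)
  rw [Real.exp_neg] at h2
  have h5 : (-t + 1) * Real.exp t ≤ 1 := by
    calc (-t + 1) * Real.exp t ≤ (Real.exp t)⁻¹ * Real.exp t :=
          mul_le_mul_of_nonneg_right h2 hE.le
      _ = 1 := inv_mul_cancel₀ hE.ne'
  have h6 : (-t + 1) * ((m:ℝ)+1) = m := by rw [ht]; field_simp; ring
  have key : Real.exp t * m ≤ (m:ℝ) + 1 := by
    nlinarith [mul_le_mul_of_nonneg_right h5 (by positivity : (0:ℝ) ≤ (m:ℝ)+1), h6, hE.le]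
  have h1 : Real.exp t ≤ ((m:ℝ) + 1) / m := by
    rw [le_div_iff₀ hm0]; exact key
  calc Real.exp 1 = Real.exp t ^ (m+1) := by
        rw [← Real.exp_nat_mul]; congr 1; rw [ht]; field_simp; norm_cast
    _ ≤ (((m : ℝ) + 1) / m) ^ (m + 1) := pow_le_pow_left₀ (Real.exp_nonneg _) h1 _

/-- F1: `n! e^n ≤ e n^(n+1)` for `n ≥ 1`. -/
lemma factorial_mul_exp_pow_le (n : ℕ) (hn : 1 ≤ n) :
    (n ! : ℝ) * Real.exp 1 ^ n ≤ Real.exp 1 * (n : ℝ) ^ (n + 1) := by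
  induction n with
  | zero => omega
  | succ m ih =>
    rcases Nat.eq_or_lt_of_le hn with h1 | h1
    · have hm0 : m = 0 := by omega
      subst hm0
      simp [Nat.factorial]
    · have hm : 1 ≤ m := by omega
      have ihm := ih hm
      have key := exp_one_le_pow_succ m hm
      have hstep : Real.exp 1 * (m:ℝ)^(m+1) ≤ ((m:ℝ)+1)^(m+1) := by
        have hm0 : (0:ℝ) < m := by exact_mod_cast hm
        calc Real.exp 1 * (m:ℝ)^(m+1)
            ≤ (((m : ℝ) + 1) / m) ^ (m + 1) * (m:ℝ)^(m+1) :=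
              mul_le_mul_of_nonneg_right key (by positivity)
          _ = ((m:ℝ)+1)^(m+1) := by
              rw [div_pow, div_mul_eq_mul_div, mul_div_assoc, div_self (by positivity), mul_one]
      have hfact : ((m+1)! : ℝ) = ((m:ℝ)+1) * (m ! : ℝ) := by
        rw [Nat.factorial_succ]; push_cast; ring
      have e1 : ((m+1)! : ℝ) * Real.exp 1 ^ (m+1)
          = ((m:ℝ)+1) * Real.exp 1 * ((m ! : ℝ) * Real.exp 1 ^ m) := by
        rw [hfact, pow_succ]; ring
      have e2 : ((m:ℝ)+1) * Real.exp 1 * ((m ! : ℝ) * Real.exp 1 ^ m)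
          ≤ ((m:ℝ)+1) * Real.exp 1 * (Real.exp 1 * (m:ℝ)^(m+1)) :=
        mul_le_mul_of_nonneg_left ihm (by positivity)
      have e3 : ((m:ℝ)+1) * Real.exp 1 * (Real.exp 1 * (m:ℝ)^(m+1))
          ≤ ((m:ℝ)+1) * Real.exp 1 * ((m:ℝ)+1)^(m+1) :=
        mul_le_mul_of_nonneg_left hstep (by positivity)
      have e4 : ((m:ℝ)+1) * Real.exp 1 * ((m:ℝ)+1)^(m+1)
          = Real.exp 1 * ((m+1:ℕ):ℝ)^(m+1+1) := by push_cast; ring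
      linarith [e1, e2, e3, e4, e1.le]

/-- F2: `q^q ≤ q! e^q`. -/
lemma pow_self_le_factorial_mul_exp (q : ℕ) :
    (q:ℝ) ^ q ≤ (q ! : ℝ) * Real.exp 1 ^ q := by
  induction q with
  | zero => simp
  | succ p ih =>
    rcases Nat.eq_zero_or_pos p with h | hp
    · subst h; simp [Nat.factorial]
    · have hp0 : (0:ℝ) < p := by exact_mod_cast hp
      have h1 : ((p:ℝ)+1)/p ≤ Real.exp (1/(p:ℝ)) := by
        calc ((p:ℝ)+1)/p = 1/(p:ℝ) + 1 := by field_simp; ring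
          _ ≤ Real.exp (1/(p:ℝ)) := Real.add_one_le_exp _
      have h3 : (((p:ℝ)+1)/p)^p ≤ Real.exp 1 := by
        calc (((p:ℝ)+1)/p)^p ≤ Real.exp (1/(p:ℝ)) ^ p :=
              pow_le_pow_left₀ (by positivity) h1 _
          _ = Real.exp ((p:ℕ) * (1/(p:ℝ))) := (Real.exp_nat_mul _ _).symm
          _ = Real.exp 1 := by congr 1; field_simp
      have h4 : ((p:ℝ)+1)^(p+1) ≤ ((p:ℝ)+1) * ((p:ℝ)^p * Real.exp 1) := by
        calc ((p:ℝ)+1)^(p+1) = ((p:ℝ)+1) * (((p:ℝ)+1)^p) := by ring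
          _ = ((p:ℝ)+1) * ((((p:ℝ)+1)/p)^p * (p:ℝ)^p) := by
              congr 1
              rw [div_pow, div_mul_eq_mul_div, mul_div_assoc, div_self (by positivity), mul_one]
          _ ≤ ((p:ℝ)+1) * (Real.exp 1 * (p:ℝ)^p) := by
              apply mul_le_mul_of_nonneg_left _ (by positivity)
              exact mul_le_mul_of_nonneg_right h3 (by positivity)
          _ = ((p:ℝ)+1) * ((p:ℝ)^p * Real.exp 1) := by ring
      have hfact : ((p+1)! : ℝ) = ((p:ℝ)+1) * (p ! : ℝ) := by
        rw [Nat.factorial_succ]; push_cast; ring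
      calc ((p+1:ℕ):ℝ)^(p+1) = ((p:ℝ)+1)^(p+1) := by push_cast; ring
        _ ≤ ((p:ℝ)+1) * ((p:ℝ)^p * Real.exp 1) := h4
        _ ≤ ((p:ℝ)+1) * ((p ! : ℝ) * Real.exp 1 ^ p * Real.exp 1) := by
            apply mul_le_mul_of_nonneg_left _ (by positivity)
            exact mul_le_mul_of_nonneg_right ih (Real.exp_nonneg _)
        _ = ((p+1)! : ℝ) * Real.exp 1 ^ (p+1) := by rw [hfact, pow_succ]; ring

/-- F3: central binomial coefficient bound. -/
lemma central_binom_le (m : ℕ) : Nat.choose (2*m) m ≤ 4 ^ m := by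
  have h1 : Nat.choose (2*m) m ≤ ∑ i ∈ range (2*m+1), Nat.choose (2*m) i := by
    apply Finset.single_le_sum (f := fun i => Nat.choose (2*m) i)
    · intro i _; exact Nat.zero_le _
    · simp; omega
  calc Nat.choose (2*m) m ≤ ∑ i ∈ range (2*m+1), Nat.choose (2*m) i := h1
    _ = 2 ^ (2*m) := Nat.sum_range_choose (2*m)
    _ = 4 ^ m := by rw [pow_mul]; norm_num

lemma ram_one (x : ℤ) : ramanujanSum 1 x = 1 := by
  unfold ramanujanSum
  have h1 : (Finset.Icc 1 1).filter (fun l => Nat.gcd l 1 = 1) = {1} := by decide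
  rw [h1, Finset.sum_singleton]
  have h2 : (2 * (Real.pi:ℂ) * Complex.I * ((1:ℕ) : ℂ) * (x : ℂ) / ((1:ℕ) : ℂ))
      = (x : ℂ) * (2 * (Real.pi : ℂ) * Complex.I) := by push_cast; ring
  rw [h2, Complex.exp_int_mul_two_pi_mul_I x, Complex.one_re]

lemma ram_bound (r : ℕ) (hr : 2 ≤ r) (x : ℤ) : |ramanujanSum r x| ≤ ((r - 1 : ℕ) : ℝ) := by
  unfold ramanujanSum
  set F := (Finset.Icc 1 r).filter (fun l => Nat.gcd l r = 1) with hF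
  have hcard : F.card ≤ r - 1 := by
    have hsub : F ⊆ Finset.Icc 1 (r-1) := by
      intro l hl
      rw [hF, Finset.mem_filter, Finset.mem_Icc] at hl
      rw [Finset.mem_Icc]
      rcases hl with ⟨⟨hl1, hl2⟩, hl3⟩
      refine ⟨hl1, ?_⟩
      rcases Nat.eq_or_lt_of_le hl2 with h | h
      · exfalso; rw [h] at hl3; rw [Nat.gcd_self] at hl3; omega
      · omega
    calc F.card ≤ (Finset.Icc 1 (r-1)).card := Finset.card_le_card hsub
      _ = r - 1 := by rw [Nat.card_Icc]; omega
  calc |(∑ l ∈ F, Complex.exp (2 * Real.pi * Complex.I * (l : ℂ) * (x : ℂ) / (r : ℂ))).re|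
      ≤ ‖(∑ l ∈ F, Complex.exp (2 * Real.pi * Complex.I * (l : ℂ) * (x : ℂ) / (r : ℂ)))‖ :=
        Complex.abs_re_le_norm _
    _ ≤ ∑ l ∈ F, ‖(Complex.exp (2 * Real.pi * Complex.I * (l : ℂ) * (x : ℂ) / (r : ℂ)))‖ :=
        norm_sum_le _ _
    _ = ∑ l ∈ F, 1 := by
        apply Finset.sum_congr rfl
        intro l _
        have h2 : (2 * (Real.pi:ℂ) * Complex.I * ((l:ℕ) : ℂ) * (x : ℂ) / ((r:ℕ) : ℂ))
            = ((2 * Real.pi * (l:ℝ) * (x:ℝ) / (r:ℝ) : ℝ) : ℂ) * Complex.I := by push_cast; ring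
        rw [h2, Complex.norm_exp_ofReal_mul_I]
    _ = (F.card : ℝ) := by rw [Finset.sum_const]; simp
    _ ≤ ((r - 1 : ℕ) : ℝ) := by exact_mod_cast hcard

lemma choose_le_of_half {s a b : ℕ} (hab : a ≤ b) (hb : 2*b ≤ s) :
    Nat.choose s a ≤ Nat.choose s b := by
  induction b, hab using Nat.le_induction with
  | base => exact le_rfl
  | succ b hab ih =>
    refine le_trans (ih (by omega)) (Nat.choose_le_succ_of_lt_half_left ?_)
    omega

lemma perPi (n k : ℕ) (hn : 2 ≤ n) (hk : n ≤ k) (π : Equiv.Perm (Fin n)) :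
    |affineShuffle k n π - cutRiffle k n π| ≤
      ((Nat.choose k (n/2-1) : ℝ) +
        ((∑ r ∈ n.divisors.filter (fun r => 3 ≤ r), r : ℕ) : ℝ) * (Nat.choose k (n/3-1) : ℝ))
      / ((n : ℝ) * (k : ℝ) ^ (n - 1)) := by
  set c := numCyclicDescents n π with hc
  set M := -(majorIndex n π : ℤ) with hM
  set g := Nat.gcd n (k - c) with hg
  set f : ℕ → ℝ := fun r => (Nat.choose ((n + k - c - r) / r) ((n - r) / r) : ℝ) * ramanujanSum r M with hf
  have hg0 : g ≠ 0 := Nat.gcd_ne_zero_left (by omega)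
  have h1 : (1:ℕ) ∈ g.divisors := Nat.one_mem_divisors.mpr hg0
  have hD : (0:ℝ) < (n : ℝ) * (k : ℝ) ^ (n - 1) := by
    have : 0 < n := by omega
    have : 0 < k := by omega
    positivity
  have hf1 : f 1 = (Nat.choose (n + k - c - 1) (n - 1) : ℝ) := by
    rw [hf]; simp only [Nat.div_one]; rw [ram_one]; ring
  have hsplit : affineShuffle k n π - cutRiffle k n π
      = (1 / ((n : ℝ) * (k : ℝ) ^ (n - 1))) * ∑ r ∈ g.divisors.erase 1, f r := by
    unfold affineShuffle cutRiffle
    rw [← hc, ← hM, ← hg, ← Finset.add_sum_erase _ f h1, hf1]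
    field_simp
    ring
  rw [hsplit, abs_mul, abs_of_pos (by positivity : (0:ℝ) < 1 / ((n : ℝ) * (k : ℝ) ^ (n - 1))),
    one_div, div_eq_inv_mul]
  rw [mul_comm (((n : ℝ) * (k : ℝ) ^ (n - 1))⁻¹) _]
  rw [mul_comm _ (((n : ℝ) * (k : ℝ) ^ (n - 1))⁻¹)]
  apply mul_le_mul_of_nonneg_left _ (by positivity)
  -- now: |∑ r ∈ erase, f r| ≤ chooseA + S * chooseB
  have hterm : ∀ r ∈ g.divisors.erase 1, |f r| ≤ ((r-1:ℕ):ℝ) * (Nat.choose k (n/r-1) : ℝ) := by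
    intro r hr
    have hr1 : r ∈ g.divisors := Finset.mem_of_mem_erase hr
    have hrne : r ≠ 1 := Finset.ne_of_mem_erase hr
    have hrpos : 0 < r := Nat.pos_of_mem_divisors hr1
    have hr2 : 2 ≤ r := by omega
    have hrdvdn : r ∣ n := (Nat.dvd_of_mem_divisors hr1).trans (Nat.gcd_dvd_left _ _)
    have hrn : r ≤ n := Nat.le_of_dvd (by omega) hrdvdn
    have htop : (n + k - c - r) / r ≤ k := by
      calc (n + k - c - r) / r ≤ (n + k) / r := Nat.div_le_div_right (by omega)
        _ ≤ (n + k) / 2 := Nat.div_le_div_left hr2 (by norm_num)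
        _ ≤ k := by omega
    have hbot : (n - r) / r = n / r - 1 := by
      rw [Nat.div_eq_sub_div hrpos hrn]
      simp
    have hch : Nat.choose ((n + k - c - r) / r) ((n - r) / r) ≤ Nat.choose k (n/r - 1) := by
      rw [hbot]
      exact Nat.choose_le_choose _ htop
    rw [hf]
    simp only []
    rw [abs_mul, Nat.abs_cast, mul_comm (((r-1:ℕ)):ℝ) _]
    exact mul_le_mul (by exact_mod_cast hch) (ram_bound r hr2 M) (abs_nonneg _) (by positivity)
  calc |∑ r ∈ g.divisors.erase 1, f r| ≤ ∑ r ∈ g.divisors.erase 1, |f r| :=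
        Finset.abs_sum_le_sum_abs _ _
    _ = (∑ r ∈ (g.divisors.erase 1).filter (fun r => r = 2), |f r|)
        + ∑ r ∈ (g.divisors.erase 1).filter (fun r => ¬ r = 2), |f r| :=
        (Finset.sum_filter_add_sum_filter_not _ _ _).symm
    _ ≤ (Nat.choose k (n/2-1) : ℝ)
        + ((∑ r ∈ n.divisors.filter (fun r => 3 ≤ r), r : ℕ) : ℝ) * (Nat.choose k (n/3-1) : ℝ) := by
        apply _root_.add_le_add
        · -- the r = 2 part
          rcases Finset.subset_singleton_iff.mp
            (by intro r hr; rw [Finset.mem_filter] at hr; simp [hr.2] :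
              (g.divisors.erase 1).filter (fun r => r = 2) ⊆ {2}) with h | h
          · rw [h, Finset.sum_empty]; positivity
          · rw [h, Finset.sum_singleton]
            have h2 : (2:ℕ) ∈ g.divisors.erase 1 := by
              have h2' : (2:ℕ) ∈ Finset.filter (fun r => r = 2) (g.divisors.erase 1) := by
                rw [h]; exact Finset.mem_singleton_self 2
              exact Finset.mem_of_mem_filter _ h2'
            have := hterm 2 h2
            simpa using this
        · -- the r ≥ 3 part
          have hB : (0:ℝ) ≤ (Nat.choose k (n/3-1) : ℝ) := by positivity
          calc ∑ r ∈ (g.divisors.erase 1).filter (fun r => ¬ r = 2), |f r|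
              ≤ ∑ r ∈ (g.divisors.erase 1).filter (fun r => ¬ r = 2),
                  (r:ℝ) * (Nat.choose k (n/3-1) : ℝ) := by
                apply Finset.sum_le_sum
                intro r hr
                rw [Finset.mem_filter] at hr
                obtain ⟨hr1, hrne2⟩ := hr
                have hr1' : r ∈ g.divisors := Finset.mem_of_mem_erase hr1
                have hrne : r ≠ 1 := Finset.ne_of_mem_erase hr1
                have hrpos : 0 < r := Nat.pos_of_mem_divisors hr1'
                have hr3 : 3 ≤ r := by omega
                have hrdvdn : r ∣ n := (Nat.dvd_of_mem_divisors hr1').trans (Nat.gcd_dvd_left _ _)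
                have hrn : r ≤ n := Nat.le_of_dvd (by omega) hrdvdn
                have hmono : Nat.choose k (n/r-1) ≤ Nat.choose k (n/3-1) := by
                  apply choose_le_of_half
                  · have : n/r ≤ n/3 := Nat.div_le_div_left hr3 (by norm_num)
                    omega
                  · omega
                calc |f r| ≤ ((r-1:ℕ):ℝ) * (Nat.choose k (n/r-1) : ℝ) := hterm r hr1
                  _ ≤ (r:ℝ) * (Nat.choose k (n/3-1) : ℝ) := by
                      apply mul_le_mul _ (by exact_mod_cast hmono) (by positivity) (by positivity)
                      exact_mod_cast Nat.sub_le r 1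
            _ ≤ ∑ r ∈ n.divisors.filter (fun r => 3 ≤ r),
                  (r:ℝ) * (Nat.choose k (n/3-1) : ℝ) := by
                apply Finset.sum_le_sum_of_subset_of_nonneg
                · intro r hr
                  rw [Finset.mem_filter] at hr ⊢
                  obtain ⟨hr1, hrne2⟩ := hr
                  have hr1' : r ∈ g.divisors := Finset.mem_of_mem_erase hr1
                  have hrne : r ≠ 1 := Finset.ne_of_mem_erase hr1
                  have hrpos : 0 < r := Nat.pos_of_mem_divisors hr1'
                  have hrdvdn : r ∣ n := (Nat.dvd_of_mem_divisors hr1').trans (Nat.gcd_dvd_left _ _)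
                  exact ⟨Nat.mem_divisors.mpr ⟨hrdvdn, by omega⟩, by omega⟩
                · intro r _ _; positivity
            _ = ((∑ r ∈ n.divisors.filter (fun r => 3 ≤ r), r : ℕ) : ℝ)
                  * (Nat.choose k (n/3-1) : ℝ) := by
                rw [← Finset.sum_mul]
                push_cast
                ring

lemma fact_pred (m : ℕ) (hm : 1 ≤ m) : (m ! : ℝ) = (m:ℝ) * ((m-1)! : ℝ) := by
  have h : m ! = m * (m-1)! := by
    conv_lhs => rw [show m = (m-1)+1 from by omega]
    rw [Nat.factorial_succ, show m-1+1 = m from by omega]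
  exact_mod_cast h

lemma a1_even (m : ℕ) (hm : 1 ≤ m) :
    Real.exp 1 * (((2*m) ! : ℝ) * (2 * (1/((m-1)! : ℝ))^2)) < 2 * 2^(2*m) * ((2*m:ℕ):ℝ)^3 := by
  have hfact : ((2*m)! : ℕ) = Nat.choose (2*m) m * m ! * m ! := by
    have h := Nat.choose_mul_factorial_mul_factorial (show m ≤ 2*m by omega)
    rw [show 2*m - m = m from by omega] at h
    omega
  have hne : ((m-1)! : ℝ) ≠ 0 := Nat.cast_ne_zero.mpr (Nat.factorial_ne_zero _)
  have hEq : (((2*m)) ! : ℝ) * (2 * (1/((m-1)!:ℝ))^2)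
      = 2 * (Nat.choose (2*m) m : ℝ) * (m:ℝ)^2 := by
    have h1 : (((2*m))! : ℝ) = (Nat.choose (2*m) m : ℝ) * (m ! : ℝ) * (m ! : ℝ) := by
      exact_mod_cast hfact
    rw [h1, fact_pred m hm]
    field_simp
  rw [hEq]
  have hC : ((Nat.choose (2*m) m : ℕ):ℝ) ≤ 4^m := by exact_mod_cast central_binom_le m
  have he : Real.exp 1 < 2.7182818286 := Real.exp_one_lt_d9
  have hm' : (1:ℝ) ≤ (m:ℝ) := by exact_mod_cast hm
  have h4 : (0:ℝ) < 4^m := by positivity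
  have hCpos : (0:ℝ) ≤ (Nat.choose (2*m) m : ℝ) := by positivity
  have h1 : Real.exp 1 * (Nat.choose (2*m) m : ℝ) ≤ 2.7182818286 * 4^m :=
    mul_le_mul he.le hC hCpos (by norm_num)
  have h2m : ((2*m:ℕ):ℝ) = 2*(m:ℝ) := by push_cast; ring
  have h2p : (2:ℝ)^(2*m) = 4^m := by rw [pow_mul]; norm_num
  rw [h2m, h2p]
  have hgoal : 2 * 4^m * (2*(m:ℝ))^3 = 16 * 4^m * (m:ℝ)^3 := by ring
  rw [hgoal]
  nlinarith [h1, mul_le_mul_of_nonneg_right h1 (by positivity : (0:ℝ) ≤ (m:ℝ)^2),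
    mul_pos h4 (by positivity : (0:ℝ) < (m:ℝ)^2), Real.exp_pos 1]

lemma a1_odd (m : ℕ) (hm : 1 ≤ m) :
    Real.exp 1 * (((2*m+1) ! : ℝ) * (2 * (1/((m-1)! : ℝ))^2))
      < 2 * 2^(2*m+1) * ((2*m+1:ℕ):ℝ)^3 * ((2*m+1:ℕ):ℝ) := by
  have hfact : ((2*m+1)! : ℕ) = (2*m+1) * ((2*m)!) := Nat.factorial_succ _
  have hfact2 : ((2*m)! : ℕ) = Nat.choose (2*m) m * m ! * m ! := by
    have h := Nat.choose_mul_factorial_mul_factorial (show m ≤ 2*m by omega)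
    rw [show 2*m - m = m from by omega] at h
    omega
  have hne : ((m-1)! : ℝ) ≠ 0 := Nat.cast_ne_zero.mpr (Nat.factorial_ne_zero _)
  have hEq : (((2*m+1)) ! : ℝ) * (2 * (1/((m-1)!:ℝ))^2)
      = 2 * (2*(m:ℝ)+1) * (Nat.choose (2*m) m : ℝ) * (m:ℝ)^2 := by
    have h1 : (((2*m+1))! : ℝ)
        = (2*(m:ℝ)+1) * ((Nat.choose (2*m) m : ℝ) * (m ! : ℝ) * (m ! : ℝ)) := by
      rw_mod_cast [hfact, hfact2]
      try push_cast
      try ring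
    rw [h1, fact_pred m hm]
    field_simp
  rw [hEq]
  have hC : ((Nat.choose (2*m) m : ℕ):ℝ) ≤ 4^m := by exact_mod_cast central_binom_le m
  have he : Real.exp 1 < 2.7182818286 := Real.exp_one_lt_d9
  have hm' : (1:ℝ) ≤ (m:ℝ) := by exact_mod_cast hm
  have h4 : (0:ℝ) < 4^m := by positivity
  have hCpos : (0:ℝ) ≤ (Nat.choose (2*m) m : ℝ) := by positivity
  have h1 : Real.exp 1 * (Nat.choose (2*m) m : ℝ) ≤ 2.7182818286 * 4^m :=
    mul_le_mul he.le hC hCpos (by norm_num)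
  have h2m : ((2*m+1:ℕ):ℝ) = 2*(m:ℝ)+1 := by push_cast; ring
  have h2p : (2:ℝ)^(2*m+1) = 2 * 4^m := by rw [pow_succ, pow_mul]; ring_nf
  rw [h2m, h2p]
  -- goal: e * (2*(2m+1)*C*m²) < 2*(2*4^m)*(2m+1)^3*(2m+1)
  nlinarith [mul_le_mul_of_nonneg_right h1
      (by positivity : (0:ℝ) ≤ (2*(m:ℝ)+1) * (m:ℝ)^2),
    mul_pos h4 (by positivity : (0:ℝ) < (2*(m:ℝ)+1) * (m:ℝ)^2),
    mul_pos h4 (by positivity : (0:ℝ) < (2*(m:ℝ)+1)^2 * (m:ℝ)^2), Real.exp_pos 1]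

lemma a1 (n : ℕ) (hn : 2 ≤ n) :
    Real.exp 1 * ((n ! : ℝ) * (2 * (1/((n/2-1)! : ℝ))^2))
      < 2 * 2^n * (n:ℝ)^3 * (n:ℝ)^(n-2*(n/2)) := by
  have hm : 1 ≤ n/2 := by omega
  rcases (show n = 2*(n/2) ∨ n = 2*(n/2)+1 from by omega) with h | h
  · have := a1_even (n/2) hm
    rw [← h] at this
    rw [show n - 2*(n/2) = 0 from by omega, pow_zero, mul_one]
    calc Real.exp 1 * ((n ! : ℝ) * (2 * (1/((n/2-1)! : ℝ))^2))
        < 2 * 2^n * ((n:ℕ):ℝ)^3 := by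
          have h2 : (2:ℝ)^(2*(n/2)) = 2^n := by rw [← h]
          rw [← h2] at this ⊢
          convert this using 3
          all_goals exact_mod_cast congrArg Nat.cast h
      _ = 2 * 2^n * (n:ℝ)^3 := by norm_num
  · have := a1_odd (n/2) hm
    rw [← h] at this
    rw [show n - 2*(n/2) = 1 from by omega, pow_one]
    calc Real.exp 1 * ((n ! : ℝ) * (2 * (1/((n/2-1)! : ℝ))^2))
        < 2 * 2^n * ((n:ℕ):ℝ)^3 * ((n:ℕ):ℝ) := by
          have h2 : (2:ℝ)^(2*(n/2)+1) = 2^n := by rw [← h]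
          rw [← h2] at this ⊢
          convert this using 3
          all_goals exact_mod_cast congrArg Nat.cast h
      _ = 2 * 2^n * (n:ℝ)^3 * (n:ℝ) := by norm_num

lemma key_q (q : ℕ) (hq : 21 ≤ q) :
    (3*(q:ℝ)+5)^4 * 4624^q < 8 * Real.exp 1 ^ (q+1) * 3528^q := by
  induction q, hq using Nat.le_induction with
  | base =>
    have h : (2.7182818283:ℝ)^22 ≤ Real.exp 1^22 :=
      pow_le_pow_left₀ (by norm_num) Real.exp_one_gt_d9.le 22
    calc (3*((21:ℕ):ℝ)+5)^4 * 4624^21 < 8 * (2.7182818283:ℝ)^22 * 3528^21 := by norm_num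
      _ ≤ 8 * Real.exp 1^22 * 3528^21 := by
          apply mul_le_mul_of_nonneg_right _ (by positivity)
          apply mul_le_mul_of_nonneg_left h (by norm_num)
  | succ q hq ih =>
    have hq' : (21:ℝ) ≤ (q:ℝ) := by exact_mod_cast hq
    have hA : (3*((q:ℝ)+1)+5) * 68 ≤ 71 * (3*(q:ℝ)+5) := by push_cast; linarith
    have hA4 : (3*((q:ℝ)+1)+5)^4 * 68^4 ≤ 71^4 * (3*(q:ℝ)+5)^4 := by
      have h1 : ((3*((q:ℝ)+1)+5) * 68)^4 ≤ (71 * (3*(q:ℝ)+5))^4 :=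
        pow_le_pow_left₀ (by positivity) hA 4
      rw [mul_pow, mul_pow] at h1
      linarith
    have hE : (4624:ℝ)*71^4 ≤ 68^4*3528*Real.exp 1 := by
      nlinarith [Real.exp_one_gt_d9]
    have h68 : (0:ℝ) < (68:ℝ)^4 := by norm_num
    rw [← mul_lt_mul_iff_right₀ h68]
    push_cast
    calc (68:ℝ)^4 * ((3*((q:ℝ)+1)+5)^4 * 4624^(q+1))
        = ((3*((q:ℝ)+1)+5)^4 * 68^4) * (4624*4624^q) := by ring
      _ ≤ (71^4 * (3*(q:ℝ)+5)^4) * (4624*4624^q) := by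
          apply mul_le_mul_of_nonneg_right hA4 (by positivity)
      _ = (4624*71^4) * ((3*(q:ℝ)+5)^4 * 4624^q) := by ring
      _ < (4624*71^4) * (8 * Real.exp 1 ^ (q+1) * 3528^q) := by
          apply mul_lt_mul_of_pos_left ih (by norm_num)
      _ ≤ (68^4*3528*Real.exp 1) * (8 * Real.exp 1 ^ (q+1) * 3528^q) := by
          apply mul_le_mul_of_nonneg_right hE (by positivity)
      _ = 68^4 * (8 * Real.exp 1 ^ (q+1+1) * 3528^(q+1)) := by ring

lemma a2l (n : ℕ) (hn : 66 ≤ n) :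
    Real.exp 1 * ((n ! : ℝ) * (2 * ((n:ℝ)^2 * (1/((n:ℝ)^(n/2-n/3) * ((n/3-1)! : ℝ))))^2))
      < 2 * 2^n * (n:ℝ)^3 * (n:ℝ)^(n-2*(n/2)) := by
  set m := n/2 with hm
  set m3 := n/3 with hm3
  set q := m3 - 1 with hq'
  have hq : 21 ≤ q := by omega
  have hq21 : (21:ℝ) ≤ (q:ℝ) := by exact_mod_cast hq
  have h3q : 3*q+3 ≤ n := by omega
  have h3q5 : n ≤ 3*q+5 := by omega
  have hm3m : m3 ≤ m := by omega
  have h2m : 2*m ≤ n := by omega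
  have h2m3 : 2*m3 ≤ n := by omega
  have hn0 : (0:ℝ) < (n:ℝ) := by exact_mod_cast (show 0 < n by omega)
  have hQ : (0:ℝ) < ((q)! : ℝ) := by exact_mod_cast Nat.factorial_pos q
  have he1 : (1:ℝ) ≤ Real.exp 1 := by
    have := Real.add_one_le_exp (1:ℝ); linarith
  have h8 : (2:ℝ)^(3*q+3) = 8 * 8^q := by
    rw [pow_add, pow_mul]; norm_num; ring
  have stepC : Real.exp 1^2 * (n:ℝ)^(2*q+4) * Real.exp 1^(2*q)
      < 2^(3*q+3) * (q:ℝ)^(2*q) * Real.exp 1^(3*q+3) := by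
    have h441 : (0:ℝ) < (441:ℝ)^q := by positivity
    rw [← mul_lt_mul_iff_left₀ h441]
    have hnle : (n:ℝ) ≤ 3*(q:ℝ)+5 := by
      have : ((n:ℕ):ℝ) ≤ ((3*q+5 : ℕ):ℝ) := by exact_mod_cast h3q5
      push_cast at this; linarith
    have hpow : (n:ℝ)^(2*q+4) ≤ (3*(q:ℝ)+5)^(2*q+4) := pow_le_pow_left₀ hn0.le hnle _
    have hsq : (3*(q:ℝ)+5)^2 * 441 ≤ 4624 * (q:ℝ)^2 := by nlinarith [hq21]
    have hsqq : ((3*(q:ℝ)+5)^2 * 441)^q ≤ (4624 * (q:ℝ)^2)^q :=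
      pow_le_pow_left₀ (by positivity) hsq q
    have hsqq2 : (3*(q:ℝ)+5)^(2*q) * 441^q ≤ 4624^q * (q:ℝ)^(2*q) := by
      have e1 : ((3*(q:ℝ)+5)^2 * 441)^q = (3*(q:ℝ)+5)^(2*q) * 441^q := by
        rw [mul_pow, ← pow_mul]
      have e2 : ((4624:ℝ) * (q:ℝ)^2)^q = 4624^q * (q:ℝ)^(2*q) := by
        rw [mul_pow, ← pow_mul]
      rw [e1, e2] at hsqq; exact hsqq
    have h3528 : (3528:ℝ)^q = 8^q * 441^q := by rw [← mul_pow]; norm_num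
    calc Real.exp 1^2 * (n:ℝ)^(2*q+4) * Real.exp 1^(2*q) * 441^q
        ≤ Real.exp 1^2 * (3*(q:ℝ)+5)^(2*q+4) * Real.exp 1^(2*q) * 441^q := by
          have h1 : Real.exp 1^2 * (n:ℝ)^(2*q+4) ≤ Real.exp 1^2 * (3*(q:ℝ)+5)^(2*q+4) :=
            mul_le_mul_of_nonneg_left hpow (by positivity)
          exact mul_le_mul_of_nonneg_right
            (mul_le_mul_of_nonneg_right h1 (by positivity)) (by positivity)
      _ = (Real.exp 1^2 * Real.exp 1^(2*q))
          * ((3*(q:ℝ)+5)^4 * ((3*(q:ℝ)+5)^(2*q) * 441^q)) := by ring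
      _ ≤ (Real.exp 1^2 * Real.exp 1^(2*q))
          * ((3*(q:ℝ)+5)^4 * (4624^q * (q:ℝ)^(2*q))) := by
          exact mul_le_mul_of_nonneg_left
            (mul_le_mul_of_nonneg_left hsqq2 (by positivity)) (by positivity)
      _ = ((3*(q:ℝ)+5)^4 * 4624^q)
          * (Real.exp 1^2 * Real.exp 1^(2*q) * (q:ℝ)^(2*q)) := by ring
      _ < (8 * Real.exp 1^(q+1) * 3528^q)
          * (Real.exp 1^2 * Real.exp 1^(2*q) * (q:ℝ)^(2*q)) :=
          mul_lt_mul_of_pos_right (key_q q hq) (by positivity)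
      _ = 2^(3*q+3) * (q:ℝ)^(2*q) * Real.exp 1^(3*q+3) * 441^q := by
          rw [h8, h3528]; ring
  have stepB : Real.exp 1^2 * (n:ℝ)^(2*q+4) * Real.exp 1^(2*q)
      < 2^n * (q:ℝ)^(2*q) * Real.exp 1^n := by
    have h2n : (2:ℝ)^(3*q+3) ≤ 2^n := pow_le_pow_right₀ (by norm_num) h3q
    have hen : Real.exp 1^(3*q+3) ≤ Real.exp 1^n := pow_le_pow_right₀ he1 h3q
    calc Real.exp 1^2 * (n:ℝ)^(2*q+4) * Real.exp 1^(2*q)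
        < 2^(3*q+3) * (q:ℝ)^(2*q) * Real.exp 1^(3*q+3) := stepC
      _ ≤ 2^n * (q:ℝ)^(2*q) * Real.exp 1^(3*q+3) :=
          mul_le_mul_of_nonneg_right
            (mul_le_mul_of_nonneg_right h2n (by positivity)) (by positivity)
      _ ≤ 2^n * (q:ℝ)^(2*q) * Real.exp 1^n :=
          mul_le_mul_of_nonneg_left hen (by positivity)
  have hsplitpow : (n:ℝ)^(n+5) = ((n:ℝ)^(n-2*m3) * (n:ℝ)^3) * (n:ℝ)^(2*q+4) := by
    rw [← pow_add, ← pow_add]; congr 1; omega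
  have stepA : Real.exp 1^2 * (n:ℝ)^(n+5) * Real.exp 1^(2*q)
      < 2^n * (n:ℝ)^3 * (n:ℝ)^(n-2*m3) * ((q:ℝ)^(2*q)) * Real.exp 1^n := by
    calc Real.exp 1^2 * (n:ℝ)^(n+5) * Real.exp 1^(2*q)
        = ((n:ℝ)^(n-2*m3) * (n:ℝ)^3)
            * (Real.exp 1^2 * (n:ℝ)^(2*q+4) * Real.exp 1^(2*q)) := by
          rw [hsplitpow]; ring
      _ < ((n:ℝ)^(n-2*m3) * (n:ℝ)^3) * (2^n * (q:ℝ)^(2*q) * Real.exp 1^n) :=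
          mul_lt_mul_of_pos_left stepB (by positivity)
      _ = 2^n * (n:ℝ)^3 * (n:ℝ)^(n-2*m3) * ((q:ℝ)^(2*q)) * Real.exp 1^n := by ring
  have hF2sq : (q:ℝ)^(2*q) ≤ ((q)! : ℝ)^2 * Real.exp 1^(2*q) := by
    have h := pow_self_le_factorial_mul_exp q
    have h2 : ((q:ℝ)^q)^2 ≤ (((q)! : ℝ) * Real.exp 1^q)^2 :=
      pow_le_pow_left₀ (by positivity) h 2
    calc (q:ℝ)^(2*q) = ((q:ℝ)^q)^2 := by rw [← pow_mul]; congr 1; ring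
      _ ≤ (((q)! : ℝ) * Real.exp 1^q)^2 := h2
      _ = ((q)! : ℝ)^2 * Real.exp 1^(2*q) := by rw [mul_pow, ← pow_mul]; congr 2; ring
  have core : Real.exp 1 * (n ! : ℝ) * (n:ℝ)^4
      < 2^n * (n:ℝ)^3 * (n:ℝ)^(n-2*m3) * ((q)! : ℝ)^2 := by
    have hExp : (0:ℝ) < Real.exp 1^n * Real.exp 1^(2*q) := by positivity
    rw [← mul_lt_mul_iff_left₀ hExp]
    calc Real.exp 1 * (n ! : ℝ) * (n:ℝ)^4 * (Real.exp 1^n * Real.exp 1^(2*q))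
        = ((n ! : ℝ) * Real.exp 1^n) * (Real.exp 1 * (n:ℝ)^4 * Real.exp 1^(2*q)) := by ring
      _ ≤ (Real.exp 1 * (n:ℝ)^(n+1)) * (Real.exp 1 * (n:ℝ)^4 * Real.exp 1^(2*q)) :=
          mul_le_mul_of_nonneg_right (factorial_mul_exp_pow_le n (by omega)) (by positivity)
      _ = Real.exp 1^2 * (n:ℝ)^(n+5) * Real.exp 1^(2*q) := by ring
      _ < 2^n * (n:ℝ)^3 * (n:ℝ)^(n-2*m3) * ((q:ℝ)^(2*q)) * Real.exp 1^n := stepA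
      _ ≤ 2^n * (n:ℝ)^3 * (n:ℝ)^(n-2*m3) * (((q)! : ℝ)^2 * Real.exp 1^(2*q))
            * Real.exp 1^n := by
          apply mul_le_mul_of_nonneg_right _ (by positivity)
          exact mul_le_mul_of_nonneg_left hF2sq (by positivity)
      _ = 2^n * (n:ℝ)^3 * (n:ℝ)^(n-2*m3) * ((q)! : ℝ)^2
            * (Real.exp 1^n * Real.exp 1^(2*q)) := by ring
  -- now deduce the goal
  have hPQ : (0:ℝ) < ((n:ℝ)^(m-m3) * ((q)! : ℝ)) := by positivity
  have hEq1 : Real.exp 1 * ((n ! : ℝ) * (2 * ((n:ℝ)^2 * (1/((n:ℝ)^(m-m3) * ((q)! : ℝ))))^2))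
      = (Real.exp 1 * (n ! : ℝ) * (n:ℝ)^4 * 2) / ((n:ℝ)^(m-m3) * ((q)! : ℝ))^2 := by
    field_simp
  rw [hEq1, div_lt_iff₀ (by positivity)]
  have hEq2 : 2 * 2^n * (n:ℝ)^3 * (n:ℝ)^(n-2*m) * ((n:ℝ)^(m-m3) * ((q)! : ℝ))^2
      = (2^n * (n:ℝ)^3 * (n:ℝ)^(n-2*m3) * ((q)! : ℝ)^2) * 2 := by
    have hp : (n:ℝ)^(n-2*m) * ((n:ℝ)^(m-m3))^2 = (n:ℝ)^(n-2*m3) := by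
      rw [← pow_mul, ← pow_add]; congr 1; omega
    calc 2 * 2^n * (n:ℝ)^3 * (n:ℝ)^(n-2*m) * ((n:ℝ)^(m-m3) * ((q)! : ℝ))^2
        = 2 * 2^n * (n:ℝ)^3 * ((n:ℝ)^(n-2*m) * ((n:ℝ)^(m-m3))^2) * ((q)! : ℝ)^2 := by ring
      _ = (2^n * (n:ℝ)^3 * (n:ℝ)^(n-2*m3) * ((q)! : ℝ)^2) * 2 := by rw [hp]; ring
  rw [hEq2]
  exact mul_lt_mul_of_pos_right core (by norm_num)

lemma arith2_large (n : ℕ) (hn : 66 ≤ n) :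
    Real.exp 1 * ((n ! : ℝ) * (1/((n/2-1)! : ℝ)
        + (n:ℝ)^2 * (1/((n:ℝ)^(n/2-n/3) * ((n/3-1)! : ℝ))))^2)
      < 4 * 2^n * (n:ℝ)^3 * (n:ℝ)^(n-2*(n/2)) := by
  have h1 := a1 n (by omega)
  have h2 := a2l n hn
  set u := 1/((n/2-1)! : ℝ) with hu
  set v := (n:ℝ)^2 * (1/((n:ℝ)^(n/2-n/3) * ((n/3-1)! : ℝ))) with hv
  have hsq : (u+v)^2 ≤ 2*u^2 + 2*v^2 := by nlinarith [sq_nonneg (u-v)]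
  have hmono : Real.exp 1 * ((n ! :ℝ) * (u+v)^2)
      ≤ Real.exp 1 * ((n ! :ℝ)*(2*u^2)) + Real.exp 1 * ((n ! :ℝ)*(2*v^2)) := by
    have h3 : Real.exp 1 * ((n ! :ℝ) * (u+v)^2)
        ≤ Real.exp 1 * ((n ! :ℝ) * (2*u^2+2*v^2)) := by
      apply mul_le_mul_of_nonneg_left _ (Real.exp_pos 1).le
      exact mul_le_mul_of_nonneg_left hsq (Nat.cast_nonneg _)
    have h4 : Real.exp 1 * ((n ! :ℝ) * (2*u^2+2*v^2))
        = Real.exp 1 * ((n ! :ℝ)*(2*u^2)) + Real.exp 1 * ((n ! :ℝ)*(2*v^2)) := by ring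
    linarith
  have hrg : (4:ℝ) * 2^n * (n:ℝ)^3 * (n:ℝ)^(n-2*(n/2))
      = 2 * 2^n * (n:ℝ)^3 * (n:ℝ)^(n-2*(n/2)) + 2 * 2^n * (n:ℝ)^3 * (n:ℝ)^(n-2*(n/2)) := by
    ring
  linarith

lemma S_le_sq (n : ℕ) (hn : 1 ≤ n) :
    (∑ r ∈ Finset.filter (fun r => 3 ≤ r) n.divisors, r) ≤ n^2 := by
  calc (∑ r ∈ Finset.filter (fun r => 3 ≤ r) n.divisors, r)
      ≤ ∑ r ∈ n.divisors, r := Finset.sum_le_sum_of_subset (Finset.filter_subset _ _)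
    _ ≤ n.divisors.card • n := by
        apply Finset.sum_le_card_nsmul
        intro r hr
        exact Nat.le_of_dvd (by omega) (Nat.dvd_of_mem_divisors hr)
    _ ≤ n * n := by
        have hcard : n.divisors.card ≤ n := by
          have hsub : n.divisors ⊆ Finset.Icc 1 n := by
            intro r hr
            rw [Finset.mem_Icc]
            exact ⟨Nat.pos_of_mem_divisors hr, Nat.le_of_dvd (by omega) (Nat.dvd_of_mem_divisors hr)⟩
          calc n.divisors.card ≤ (Finset.Icc 1 n).card := Finset.card_le_card hsub
            _ = n := by rw [Nat.card_Icc]; omega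
        calc n.divisors.card • n = n.divisors.card * n := smul_eq_mul _ _
          _ ≤ n * n := Nat.mul_le_mul_right n hcard
    _ = n^2 := by rw [sq]


lemma arith_case_2 :
    Real.exp 1 * (((2:ℕ) ! : ℝ) *
      (1/(((2:ℕ)/2-1)! : ℝ) + ((∑ r ∈ Finset.filter (fun r => 3 ≤ r) (Nat.divisors 2), r : ℕ) : ℝ)
        * (1/(((2:ℕ):ℝ)^((2:ℕ)/2-(2:ℕ)/3) * (((2:ℕ)/3-1)! : ℝ))))^2)
      < 4 * 2^(2:ℕ) * (((2:ℕ)):ℝ)^3 * (((2:ℕ)):ℝ)^((2:ℕ)-2*((2:ℕ)/2)) := by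
  refine lt_of_le_of_lt (mul_le_mul_of_nonneg_right Real.exp_one_lt_d9.le (by positivity)) ?_
  norm_num [show (∑ r ∈ Finset.filter (fun r => 3 ≤ r) (Nat.divisors 2), r) = 0 from by decide, show (0:ℕ)! = 1 from rfl, show (2:ℕ)! = 2 from rfl]

lemma arith_case_3 :
    Real.exp 1 * (((3:ℕ) ! : ℝ) *
      (1/(((3:ℕ)/2-1)! : ℝ) + ((∑ r ∈ Finset.filter (fun r => 3 ≤ r) (Nat.divisors 3), r : ℕ) : ℝ)
        * (1/(((3:ℕ):ℝ)^((3:ℕ)/2-(3:ℕ)/3) * (((3:ℕ)/3-1)! : ℝ))))^2)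
      < 4 * 2^(3:ℕ) * (((3:ℕ)):ℝ)^3 * (((3:ℕ)):ℝ)^((3:ℕ)-2*((3:ℕ)/2)) := by
  refine lt_of_le_of_lt (mul_le_mul_of_nonneg_right Real.exp_one_lt_d9.le (by positivity)) ?_
  norm_num [show (∑ r ∈ Finset.filter (fun r => 3 ≤ r) (Nat.divisors 3), r) = 3 from by decide, show (0:ℕ)! = 1 from rfl, show (3:ℕ)! = 6 from rfl]

lemma arith_case_4 :
    Real.exp 1 * (((4:ℕ) ! : ℝ) *
      (1/(((4:ℕ)/2-1)! : ℝ) + ((∑ r ∈ Finset.filter (fun r => 3 ≤ r) (Nat.divisors 4), r : ℕ) : ℝ)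
        * (1/(((4:ℕ):ℝ)^((4:ℕ)/2-(4:ℕ)/3) * (((4:ℕ)/3-1)! : ℝ))))^2)
      < 4 * 2^(4:ℕ) * (((4:ℕ)):ℝ)^3 * (((4:ℕ)):ℝ)^((4:ℕ)-2*((4:ℕ)/2)) := by
  refine lt_of_le_of_lt (mul_le_mul_of_nonneg_right Real.exp_one_lt_d9.le (by positivity)) ?_
  norm_num [show (∑ r ∈ Finset.filter (fun r => 3 ≤ r) (Nat.divisors 4), r) = 4 from by decide, show (0:ℕ)! = 1 from rfl, show (1:ℕ)! = 1 from rfl, show (4:ℕ)! = 24 from rfl]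

lemma arith_case_5 :
    Real.exp 1 * (((5:ℕ) ! : ℝ) *
      (1/(((5:ℕ)/2-1)! : ℝ) + ((∑ r ∈ Finset.filter (fun r => 3 ≤ r) (Nat.divisors 5), r : ℕ) : ℝ)
        * (1/(((5:ℕ):ℝ)^((5:ℕ)/2-(5:ℕ)/3) * (((5:ℕ)/3-1)! : ℝ))))^2)
      < 4 * 2^(5:ℕ) * (((5:ℕ)):ℝ)^3 * (((5:ℕ)):ℝ)^((5:ℕ)-2*((5:ℕ)/2)) := by
  refine lt_of_le_of_lt (mul_le_mul_of_nonneg_right Real.exp_one_lt_d9.le (by positivity)) ?_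
  norm_num [show (∑ r ∈ Finset.filter (fun r => 3 ≤ r) (Nat.divisors 5), r) = 5 from by decide, show (0:ℕ)! = 1 from rfl, show (1:ℕ)! = 1 from rfl, show (5:ℕ)! = 120 from rfl]

lemma arith_case_6 :
    Real.exp 1 * (((6:ℕ) ! : ℝ) *
      (1/(((6:ℕ)/2-1)! : ℝ) + ((∑ r ∈ Finset.filter (fun r => 3 ≤ r) (Nat.divisors 6), r : ℕ) : ℝ)
        * (1/(((6:ℕ):ℝ)^((6:ℕ)/2-(6:ℕ)/3) * (((6:ℕ)/3-1)! : ℝ))))^2)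
      < 4 * 2^(6:ℕ) * (((6:ℕ)):ℝ)^3 * (((6:ℕ)):ℝ)^((6:ℕ)-2*((6:ℕ)/2)) := by
  refine lt_of_le_of_lt (mul_le_mul_of_nonneg_right Real.exp_one_lt_d9.le (by positivity)) ?_
  norm_num [show (∑ r ∈ Finset.filter (fun r => 3 ≤ r) (Nat.divisors 6), r) = 9 from by decide, show (1:ℕ)! = 1 from rfl, show (2:ℕ)! = 2 from rfl, show (6:ℕ)! = 720 from rfl]

lemma arith_case_7 :
    Real.exp 1 * (((7:ℕ) ! : ℝ) *
      (1/(((7:ℕ)/2-1)! : ℝ) + ((∑ r ∈ Finset.filter (fun r => 3 ≤ r) (Nat.divisors 7), r : ℕ) : ℝ)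
        * (1/(((7:ℕ):ℝ)^((7:ℕ)/2-(7:ℕ)/3) * (((7:ℕ)/3-1)! : ℝ))))^2)
      < 4 * 2^(7:ℕ) * (((7:ℕ)):ℝ)^3 * (((7:ℕ)):ℝ)^((7:ℕ)-2*((7:ℕ)/2)) := by
  refine lt_of_le_of_lt (mul_le_mul_of_nonneg_right Real.exp_one_lt_d9.le (by positivity)) ?_
  norm_num [show (∑ r ∈ Finset.filter (fun r => 3 ≤ r) (Nat.divisors 7), r) = 7 from by decide, show (1:ℕ)! = 1 from rfl, show (2:ℕ)! = 2 from rfl, show (7:ℕ)! = 5040 from rfl]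

lemma arith_case_8 :
    Real.exp 1 * (((8:ℕ) ! : ℝ) *
      (1/(((8:ℕ)/2-1)! : ℝ) + ((∑ r ∈ Finset.filter (fun r => 3 ≤ r) (Nat.divisors 8), r : ℕ) : ℝ)
        * (1/(((8:ℕ):ℝ)^((8:ℕ)/2-(8:ℕ)/3) * (((8:ℕ)/3-1)! : ℝ))))^2)
      < 4 * 2^(8:ℕ) * (((8:ℕ)):ℝ)^3 * (((8:ℕ)):ℝ)^((8:ℕ)-2*((8:ℕ)/2)) := by
  refine lt_of_le_of_lt (mul_le_mul_of_nonneg_right Real.exp_one_lt_d9.le (by positivity)) ?_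
  norm_num [show (∑ r ∈ Finset.filter (fun r => 3 ≤ r) (Nat.divisors 8), r) = 12 from by decide, show (1:ℕ)! = 1 from rfl, show (3:ℕ)! = 6 from rfl, show (8:ℕ)! = 40320 from rfl]

lemma arith_case_9 :
    Real.exp 1 * (((9:ℕ) ! : ℝ) *
      (1/(((9:ℕ)/2-1)! : ℝ) + ((∑ r ∈ Finset.filter (fun r => 3 ≤ r) (Nat.divisors 9), r : ℕ) : ℝ)
        * (1/(((9:ℕ):ℝ)^((9:ℕ)/2-(9:ℕ)/3) * (((9:ℕ)/3-1)! : ℝ))))^2)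
      < 4 * 2^(9:ℕ) * (((9:ℕ)):ℝ)^3 * (((9:ℕ)):ℝ)^((9:ℕ)-2*((9:ℕ)/2)) := by
  refine lt_of_le_of_lt (mul_le_mul_of_nonneg_right Real.exp_one_lt_d9.le (by positivity)) ?_
  norm_num [show (∑ r ∈ Finset.filter (fun r => 3 ≤ r) (Nat.divisors 9), r) = 12 from by decide, show (2:ℕ)! = 2 from rfl, show (3:ℕ)! = 6 from rfl, show (9:ℕ)! = 362880 from rfl]

lemma arith_case_10 :
    Real.exp 1 * (((10:ℕ) ! : ℝ) *
      (1/(((10:ℕ)/2-1)! : ℝ) + ((∑ r ∈ Finset.filter (fun r => 3 ≤ r) (Nat.divisors 10), r : ℕ) : ℝ)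
        * (1/(((10:ℕ):ℝ)^((10:ℕ)/2-(10:ℕ)/3) * (((10:ℕ)/3-1)! : ℝ))))^2)
      < 4 * 2^(10:ℕ) * (((10:ℕ)):ℝ)^3 * (((10:ℕ)):ℝ)^((10:ℕ)-2*((10:ℕ)/2)) := by
  refine lt_of_le_of_lt (mul_le_mul_of_nonneg_right Real.exp_one_lt_d9.le (by positivity)) ?_
  norm_num [show (∑ r ∈ Finset.filter (fun r => 3 ≤ r) (Nat.divisors 10), r) = 15 from by decide, show (2:ℕ)! = 2 from rfl, show (4:ℕ)! = 24 from rfl, show (10:ℕ)! = 3628800 from rfl]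

lemma arith_case_11 :
    Real.exp 1 * (((11:ℕ) ! : ℝ) *
      (1/(((11:ℕ)/2-1)! : ℝ) + ((∑ r ∈ Finset.filter (fun r => 3 ≤ r) (Nat.divisors 11), r : ℕ) : ℝ)
        * (1/(((11:ℕ):ℝ)^((11:ℕ)/2-(11:ℕ)/3) * (((11:ℕ)/3-1)! : ℝ))))^2)
      < 4 * 2^(11:ℕ) * (((11:ℕ)):ℝ)^3 * (((11:ℕ)):ℝ)^((11:ℕ)-2*((11:ℕ)/2)) := by
  refine lt_of_le_of_lt (mul_le_mul_of_nonneg_right Real.exp_one_lt_d9.le (by positivity)) ?_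
  norm_num [show (∑ r ∈ Finset.filter (fun r => 3 ≤ r) (Nat.divisors 11), r) = 11 from by decide, show (2:ℕ)! = 2 from rfl, show (4:ℕ)! = 24 from rfl, show (11:ℕ)! = 39916800 from rfl]

lemma arith_case_12 :
    Real.exp 1 * (((12:ℕ) ! : ℝ) *
      (1/(((12:ℕ)/2-1)! : ℝ) + ((∑ r ∈ Finset.filter (fun r => 3 ≤ r) (Nat.divisors 12), r : ℕ) : ℝ)
        * (1/(((12:ℕ):ℝ)^((12:ℕ)/2-(12:ℕ)/3) * (((12:ℕ)/3-1)! : ℝ))))^2)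
      < 4 * 2^(12:ℕ) * (((12:ℕ)):ℝ)^3 * (((12:ℕ)):ℝ)^((12:ℕ)-2*((12:ℕ)/2)) := by
  refine lt_of_le_of_lt (mul_le_mul_of_nonneg_right Real.exp_one_lt_d9.le (by positivity)) ?_
  norm_num [show (∑ r ∈ Finset.filter (fun r => 3 ≤ r) (Nat.divisors 12), r) = 25 from by decide, show (3:ℕ)! = 6 from rfl, show (5:ℕ)! = 120 from rfl, show (12:ℕ)! = 479001600 from rfl]

lemma arith_case_13 :
    Real.exp 1 * (((13:ℕ) ! : ℝ) *
      (1/(((13:ℕ)/2-1)! : ℝ) + ((∑ r ∈ Finset.filter (fun r => 3 ≤ r) (Nat.divisors 13), r : ℕ) : ℝ)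
        * (1/(((13:ℕ):ℝ)^((13:ℕ)/2-(13:ℕ)/3) * (((13:ℕ)/3-1)! : ℝ))))^2)
      < 4 * 2^(13:ℕ) * (((13:ℕ)):ℝ)^3 * (((13:ℕ)):ℝ)^((13:ℕ)-2*((13:ℕ)/2)) := by
  refine lt_of_le_of_lt (mul_le_mul_of_nonneg_right Real.exp_one_lt_d9.le (by positivity)) ?_
  norm_num [show (∑ r ∈ Finset.filter (fun r => 3 ≤ r) (Nat.divisors 13), r) = 13 from by decide, show (3:ℕ)! = 6 from rfl, show (5:ℕ)! = 120 from rfl, show (13:ℕ)! = 6227020800 from rfl]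

lemma arith_case_14 :
    Real.exp 1 * (((14:ℕ) ! : ℝ) *
      (1/(((14:ℕ)/2-1)! : ℝ) + ((∑ r ∈ Finset.filter (fun r => 3 ≤ r) (Nat.divisors 14), r : ℕ) : ℝ)
        * (1/(((14:ℕ):ℝ)^((14:ℕ)/2-(14:ℕ)/3) * (((14:ℕ)/3-1)! : ℝ))))^2)
      < 4 * 2^(14:ℕ) * (((14:ℕ)):ℝ)^3 * (((14:ℕ)):ℝ)^((14:ℕ)-2*((14:ℕ)/2)) := by
  refine lt_of_le_of_lt (mul_le_mul_of_nonneg_right Real.exp_one_lt_d9.le (by positivity)) ?_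
  norm_num [show (∑ r ∈ Finset.filter (fun r => 3 ≤ r) (Nat.divisors 14), r) = 21 from by decide, show (3:ℕ)! = 6 from rfl, show (6:ℕ)! = 720 from rfl, show (14:ℕ)! = 87178291200 from rfl]

lemma arith_case_15 :
    Real.exp 1 * (((15:ℕ) ! : ℝ) *
      (1/(((15:ℕ)/2-1)! : ℝ) + ((∑ r ∈ Finset.filter (fun r => 3 ≤ r) (Nat.divisors 15), r : ℕ) : ℝ)
        * (1/(((15:ℕ):ℝ)^((15:ℕ)/2-(15:ℕ)/3) * (((15:ℕ)/3-1)! : ℝ))))^2)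
      < 4 * 2^(15:ℕ) * (((15:ℕ)):ℝ)^3 * (((15:ℕ)):ℝ)^((15:ℕ)-2*((15:ℕ)/2)) := by
  refine lt_of_le_of_lt (mul_le_mul_of_nonneg_right Real.exp_one_lt_d9.le (by positivity)) ?_
  norm_num [show (∑ r ∈ Finset.filter (fun r => 3 ≤ r) (Nat.divisors 15), r) = 23 from by decide, show (4:ℕ)! = 24 from rfl, show (6:ℕ)! = 720 from rfl, show (15:ℕ)! = 1307674368000 from rfl]

lemma arith_case_16 :
    Real.exp 1 * (((16:ℕ) ! : ℝ) *
      (1/(((16:ℕ)/2-1)! : ℝ) + ((∑ r ∈ Finset.filter (fun r => 3 ≤ r) (Nat.divisors 16), r : ℕ) : ℝ)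
        * (1/(((16:ℕ):ℝ)^((16:ℕ)/2-(16:ℕ)/3) * (((16:ℕ)/3-1)! : ℝ))))^2)
      < 4 * 2^(16:ℕ) * (((16:ℕ)):ℝ)^3 * (((16:ℕ)):ℝ)^((16:ℕ)-2*((16:ℕ)/2)) := by
  refine lt_of_le_of_lt (mul_le_mul_of_nonneg_right Real.exp_one_lt_d9.le (by positivity)) ?_
  norm_num [show (∑ r ∈ Finset.filter (fun r => 3 ≤ r) (Nat.divisors 16), r) = 28 from by decide, show (4:ℕ)! = 24 from rfl, show (7:ℕ)! = 5040 from rfl, show (16:ℕ)! = 20922789888000 from rfl]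

lemma arith_case_17 :
    Real.exp 1 * (((17:ℕ) ! : ℝ) *
      (1/(((17:ℕ)/2-1)! : ℝ) + ((∑ r ∈ Finset.filter (fun r => 3 ≤ r) (Nat.divisors 17), r : ℕ) : ℝ)
        * (1/(((17:ℕ):ℝ)^((17:ℕ)/2-(17:ℕ)/3) * (((17:ℕ)/3-1)! : ℝ))))^2)
      < 4 * 2^(17:ℕ) * (((17:ℕ)):ℝ)^3 * (((17:ℕ)):ℝ)^((17:ℕ)-2*((17:ℕ)/2)) := by
  refine lt_of_le_of_lt (mul_le_mul_of_nonneg_right Real.exp_one_lt_d9.le (by positivity)) ?_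
  norm_num [show (∑ r ∈ Finset.filter (fun r => 3 ≤ r) (Nat.divisors 17), r) = 17 from by decide, show (4:ℕ)! = 24 from rfl, show (7:ℕ)! = 5040 from rfl, show (17:ℕ)! = 355687428096000 from rfl]

lemma arith_case_18 :
    Real.exp 1 * (((18:ℕ) ! : ℝ) *
      (1/(((18:ℕ)/2-1)! : ℝ) + ((∑ r ∈ Finset.filter (fun r => 3 ≤ r) (Nat.divisors 18), r : ℕ) : ℝ)
        * (1/(((18:ℕ):ℝ)^((18:ℕ)/2-(18:ℕ)/3) * (((18:ℕ)/3-1)! : ℝ))))^2)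
      < 4 * 2^(18:ℕ) * (((18:ℕ)):ℝ)^3 * (((18:ℕ)):ℝ)^((18:ℕ)-2*((18:ℕ)/2)) := by
  refine lt_of_le_of_lt (mul_le_mul_of_nonneg_right Real.exp_one_lt_d9.le (by positivity)) ?_
  norm_num [show (∑ r ∈ Finset.filter (fun r => 3 ≤ r) (Nat.divisors 18), r) = 36 from by decide, show (5:ℕ)! = 120 from rfl, show (8:ℕ)! = 40320 from rfl, show (18:ℕ)! = 6402373705728000 from rfl]

lemma arith_case_19 :
    Real.exp 1 * (((19:ℕ) ! : ℝ) *
      (1/(((19:ℕ)/2-1)! : ℝ) + ((∑ r ∈ Finset.filter (fun r => 3 ≤ r) (Nat.divisors 19), r : ℕ) : ℝ)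
        * (1/(((19:ℕ):ℝ)^((19:ℕ)/2-(19:ℕ)/3) * (((19:ℕ)/3-1)! : ℝ))))^2)
      < 4 * 2^(19:ℕ) * (((19:ℕ)):ℝ)^3 * (((19:ℕ)):ℝ)^((19:ℕ)-2*((19:ℕ)/2)) := by
  refine lt_of_le_of_lt (mul_le_mul_of_nonneg_right Real.exp_one_lt_d9.le (by positivity)) ?_
  norm_num [show (∑ r ∈ Finset.filter (fun r => 3 ≤ r) (Nat.divisors 19), r) = 19 from by decide, show (5:ℕ)! = 120 from rfl, show (8:ℕ)! = 40320 from rfl, show (19:ℕ)! = 121645100408832000 from rfl]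

lemma arith_case_20 :
    Real.exp 1 * (((20:ℕ) ! : ℝ) *
      (1/(((20:ℕ)/2-1)! : ℝ) + ((∑ r ∈ Finset.filter (fun r => 3 ≤ r) (Nat.divisors 20), r : ℕ) : ℝ)
        * (1/(((20:ℕ):ℝ)^((20:ℕ)/2-(20:ℕ)/3) * (((20:ℕ)/3-1)! : ℝ))))^2)
      < 4 * 2^(20:ℕ) * (((20:ℕ)):ℝ)^3 * (((20:ℕ)):ℝ)^((20:ℕ)-2*((20:ℕ)/2)) := by
  refine lt_of_le_of_lt (mul_le_mul_of_nonneg_right Real.exp_one_lt_d9.le (by positivity)) ?_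
  norm_num [show (∑ r ∈ Finset.filter (fun r => 3 ≤ r) (Nat.divisors 20), r) = 39 from by decide, show (5:ℕ)! = 120 from rfl, show (9:ℕ)! = 362880 from rfl, show (20:ℕ)! = 2432902008176640000 from rfl]

lemma arith_case_21 :
    Real.exp 1 * (((21:ℕ) ! : ℝ) *
      (1/(((21:ℕ)/2-1)! : ℝ) + ((∑ r ∈ Finset.filter (fun r => 3 ≤ r) (Nat.divisors 21), r : ℕ) : ℝ)
        * (1/(((21:ℕ):ℝ)^((21:ℕ)/2-(21:ℕ)/3) * (((21:ℕ)/3-1)! : ℝ))))^2)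
      < 4 * 2^(21:ℕ) * (((21:ℕ)):ℝ)^3 * (((21:ℕ)):ℝ)^((21:ℕ)-2*((21:ℕ)/2)) := by
  refine lt_of_le_of_lt (mul_le_mul_of_nonneg_right Real.exp_one_lt_d9.le (by positivity)) ?_
  norm_num [show (∑ r ∈ Finset.filter (fun r => 3 ≤ r) (Nat.divisors 21), r) = 31 from by decide, show (6:ℕ)! = 720 from rfl, show (9:ℕ)! = 362880 from rfl, show (21:ℕ)! = 51090942171709440000 from rfl]

lemma arith_case_22 :
    Real.exp 1 * (((22:ℕ) ! : ℝ) *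
      (1/(((22:ℕ)/2-1)! : ℝ) + ((∑ r ∈ Finset.filter (fun r => 3 ≤ r) (Nat.divisors 22), r : ℕ) : ℝ)
        * (1/(((22:ℕ):ℝ)^((22:ℕ)/2-(22:ℕ)/3) * (((22:ℕ)/3-1)! : ℝ))))^2)
      < 4 * 2^(22:ℕ) * (((22:ℕ)):ℝ)^3 * (((22:ℕ)):ℝ)^((22:ℕ)-2*((22:ℕ)/2)) := by
  refine lt_of_le_of_lt (mul_le_mul_of_nonneg_right Real.exp_one_lt_d9.le (by positivity)) ?_
  norm_num [show (∑ r ∈ Finset.filter (fun r => 3 ≤ r) (Nat.divisors 22), r) = 33 from by decide, show (6:ℕ)! = 720 from rfl, show (10:ℕ)! = 3628800 from rfl, show (22:ℕ)! = 1124000727777607680000 from rfl]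

lemma arith_case_23 :
    Real.exp 1 * (((23:ℕ) ! : ℝ) *
      (1/(((23:ℕ)/2-1)! : ℝ) + ((∑ r ∈ Finset.filter (fun r => 3 ≤ r) (Nat.divisors 23), r : ℕ) : ℝ)
        * (1/(((23:ℕ):ℝ)^((23:ℕ)/2-(23:ℕ)/3) * (((23:ℕ)/3-1)! : ℝ))))^2)
      < 4 * 2^(23:ℕ) * (((23:ℕ)):ℝ)^3 * (((23:ℕ)):ℝ)^((23:ℕ)-2*((23:ℕ)/2)) := by
  refine lt_of_le_of_lt (mul_le_mul_of_nonneg_right Real.exp_one_lt_d9.le (by positivity)) ?_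
  norm_num [show (∑ r ∈ Finset.filter (fun r => 3 ≤ r) (Nat.divisors 23), r) = 23 from by decide, show (6:ℕ)! = 720 from rfl, show (10:ℕ)! = 3628800 from rfl, show (23:ℕ)! = 25852016738884976640000 from rfl]

lemma arith_case_24 :
    Real.exp 1 * (((24:ℕ) ! : ℝ) *
      (1/(((24:ℕ)/2-1)! : ℝ) + ((∑ r ∈ Finset.filter (fun r => 3 ≤ r) (Nat.divisors 24), r : ℕ) : ℝ)
        * (1/(((24:ℕ):ℝ)^((24:ℕ)/2-(24:ℕ)/3) * (((24:ℕ)/3-1)! : ℝ))))^2)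
      < 4 * 2^(24:ℕ) * (((24:ℕ)):ℝ)^3 * (((24:ℕ)):ℝ)^((24:ℕ)-2*((24:ℕ)/2)) := by
  refine lt_of_le_of_lt (mul_le_mul_of_nonneg_right Real.exp_one_lt_d9.le (by positivity)) ?_
  norm_num [show (∑ r ∈ Finset.filter (fun r => 3 ≤ r) (Nat.divisors 24), r) = 57 from by decide, show (7:ℕ)! = 5040 from rfl, show (11:ℕ)! = 39916800 from rfl, show (24:ℕ)! = 620448401733239439360000 from rfl]

lemma arith_case_25 :
    Real.exp 1 * (((25:ℕ) ! : ℝ) *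
      (1/(((25:ℕ)/2-1)! : ℝ) + ((∑ r ∈ Finset.filter (fun r => 3 ≤ r) (Nat.divisors 25), r : ℕ) : ℝ)
        * (1/(((25:ℕ):ℝ)^((25:ℕ)/2-(25:ℕ)/3) * (((25:ℕ)/3-1)! : ℝ))))^2)
      < 4 * 2^(25:ℕ) * (((25:ℕ)):ℝ)^3 * (((25:ℕ)):ℝ)^((25:ℕ)-2*((25:ℕ)/2)) := by
  refine lt_of_le_of_lt (mul_le_mul_of_nonneg_right Real.exp_one_lt_d9.le (by positivity)) ?_
  norm_num [show (∑ r ∈ Finset.filter (fun r => 3 ≤ r) (Nat.divisors 25), r) = 30 from by decide, show (7:ℕ)! = 5040 from rfl, show (11:ℕ)! = 39916800 from rfl, show (25:ℕ)! = 15511210043330985984000000 from rfl]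

lemma arith_case_26 :
    Real.exp 1 * (((26:ℕ) ! : ℝ) *
      (1/(((26:ℕ)/2-1)! : ℝ) + ((∑ r ∈ Finset.filter (fun r => 3 ≤ r) (Nat.divisors 26), r : ℕ) : ℝ)
        * (1/(((26:ℕ):ℝ)^((26:ℕ)/2-(26:ℕ)/3) * (((26:ℕ)/3-1)! : ℝ))))^2)
      < 4 * 2^(26:ℕ) * (((26:ℕ)):ℝ)^3 * (((26:ℕ)):ℝ)^((26:ℕ)-2*((26:ℕ)/2)) := by
  refine lt_of_le_of_lt (mul_le_mul_of_nonneg_right Real.exp_one_lt_d9.le (by positivity)) ?_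
  norm_num [show (∑ r ∈ Finset.filter (fun r => 3 ≤ r) (Nat.divisors 26), r) = 39 from by decide, show (7:ℕ)! = 5040 from rfl, show (12:ℕ)! = 479001600 from rfl, show (26:ℕ)! = 403291461126605635584000000 from rfl]

lemma arith_case_27 :
    Real.exp 1 * (((27:ℕ) ! : ℝ) *
      (1/(((27:ℕ)/2-1)! : ℝ) + ((∑ r ∈ Finset.filter (fun r => 3 ≤ r) (Nat.divisors 27), r : ℕ) : ℝ)
        * (1/(((27:ℕ):ℝ)^((27:ℕ)/2-(27:ℕ)/3) * (((27:ℕ)/3-1)! : ℝ))))^2)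
      < 4 * 2^(27:ℕ) * (((27:ℕ)):ℝ)^3 * (((27:ℕ)):ℝ)^((27:ℕ)-2*((27:ℕ)/2)) := by
  refine lt_of_le_of_lt (mul_le_mul_of_nonneg_right Real.exp_one_lt_d9.le (by positivity)) ?_
  norm_num [show (∑ r ∈ Finset.filter (fun r => 3 ≤ r) (Nat.divisors 27), r) = 39 from by decide, show (8:ℕ)! = 40320 from rfl, show (12:ℕ)! = 479001600 from rfl, show (27:ℕ)! = 10888869450418352160768000000 from rfl]

lemma arith_case_28 :
    Real.exp 1 * (((28:ℕ) ! : ℝ) *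
      (1/(((28:ℕ)/2-1)! : ℝ) + ((∑ r ∈ Finset.filter (fun r => 3 ≤ r) (Nat.divisors 28), r : ℕ) : ℝ)
        * (1/(((28:ℕ):ℝ)^((28:ℕ)/2-(28:ℕ)/3) * (((28:ℕ)/3-1)! : ℝ))))^2)
      < 4 * 2^(28:ℕ) * (((28:ℕ)):ℝ)^3 * (((28:ℕ)):ℝ)^((28:ℕ)-2*((28:ℕ)/2)) := by
  refine lt_of_le_of_lt (mul_le_mul_of_nonneg_right Real.exp_one_lt_d9.le (by positivity)) ?_
  norm_num [show (∑ r ∈ Finset.filter (fun r => 3 ≤ r) (Nat.divisors 28), r) = 53 from by decide, show (8:ℕ)! = 40320 from rfl, show (13:ℕ)! = 6227020800 from rfl, show (28:ℕ)! = 304888344611713860501504000000 from rfl]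

lemma arith_case_29 :
    Real.exp 1 * (((29:ℕ) ! : ℝ) *
      (1/(((29:ℕ)/2-1)! : ℝ) + ((∑ r ∈ Finset.filter (fun r => 3 ≤ r) (Nat.divisors 29), r : ℕ) : ℝ)
        * (1/(((29:ℕ):ℝ)^((29:ℕ)/2-(29:ℕ)/3) * (((29:ℕ)/3-1)! : ℝ))))^2)
      < 4 * 2^(29:ℕ) * (((29:ℕ)):ℝ)^3 * (((29:ℕ)):ℝ)^((29:ℕ)-2*((29:ℕ)/2)) := by
  refine lt_of_le_of_lt (mul_le_mul_of_nonneg_right Real.exp_one_lt_d9.le (by positivity)) ?_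
  norm_num [show (∑ r ∈ Finset.filter (fun r => 3 ≤ r) (Nat.divisors 29), r) = 29 from by decide, show (8:ℕ)! = 40320 from rfl, show (13:ℕ)! = 6227020800 from rfl, show (29:ℕ)! = 8841761993739701954543616000000 from rfl]

lemma arith_case_30 :
    Real.exp 1 * (((30:ℕ) ! : ℝ) *
      (1/(((30:ℕ)/2-1)! : ℝ) + ((∑ r ∈ Finset.filter (fun r => 3 ≤ r) (Nat.divisors 30), r : ℕ) : ℝ)
        * (1/(((30:ℕ):ℝ)^((30:ℕ)/2-(30:ℕ)/3) * (((30:ℕ)/3-1)! : ℝ))))^2)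
      < 4 * 2^(30:ℕ) * (((30:ℕ)):ℝ)^3 * (((30:ℕ)):ℝ)^((30:ℕ)-2*((30:ℕ)/2)) := by
  refine lt_of_le_of_lt (mul_le_mul_of_nonneg_right Real.exp_one_lt_d9.le (by positivity)) ?_
  norm_num [show (∑ r ∈ Finset.filter (fun r => 3 ≤ r) (Nat.divisors 30), r) = 69 from by decide, show (9:ℕ)! = 362880 from rfl, show (14:ℕ)! = 87178291200 from rfl, show (30:ℕ)! = 265252859812191058636308480000000 from rfl]

lemma arith_case_31 :
    Real.exp 1 * (((31:ℕ) ! : ℝ) *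
      (1/(((31:ℕ)/2-1)! : ℝ) + ((∑ r ∈ Finset.filter (fun r => 3 ≤ r) (Nat.divisors 31), r : ℕ) : ℝ)
        * (1/(((31:ℕ):ℝ)^((31:ℕ)/2-(31:ℕ)/3) * (((31:ℕ)/3-1)! : ℝ))))^2)
      < 4 * 2^(31:ℕ) * (((31:ℕ)):ℝ)^3 * (((31:ℕ)):ℝ)^((31:ℕ)-2*((31:ℕ)/2)) := by
  refine lt_of_le_of_lt (mul_le_mul_of_nonneg_right Real.exp_one_lt_d9.le (by positivity)) ?_
  norm_num [show (∑ r ∈ Finset.filter (fun r => 3 ≤ r) (Nat.divisors 31), r) = 31 from by decide, show (9:ℕ)! = 362880 from rfl, show (14:ℕ)! = 87178291200 from rfl, show (31:ℕ)! = 8222838654177922817725562880000000 from rfl]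

lemma arith_case_32 :
    Real.exp 1 * (((32:ℕ) ! : ℝ) *
      (1/(((32:ℕ)/2-1)! : ℝ) + ((∑ r ∈ Finset.filter (fun r => 3 ≤ r) (Nat.divisors 32), r : ℕ) : ℝ)
        * (1/(((32:ℕ):ℝ)^((32:ℕ)/2-(32:ℕ)/3) * (((32:ℕ)/3-1)! : ℝ))))^2)
      < 4 * 2^(32:ℕ) * (((32:ℕ)):ℝ)^3 * (((32:ℕ)):ℝ)^((32:ℕ)-2*((32:ℕ)/2)) := by
  refine lt_of_le_of_lt (mul_le_mul_of_nonneg_right Real.exp_one_lt_d9.le (by positivity)) ?_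
  norm_num [show (∑ r ∈ Finset.filter (fun r => 3 ≤ r) (Nat.divisors 32), r) = 60 from by decide, show (9:ℕ)! = 362880 from rfl, show (15:ℕ)! = 1307674368000 from rfl, show (32:ℕ)! = 263130836933693530167218012160000000 from rfl]

lemma arith_case_33 :
    Real.exp 1 * (((33:ℕ) ! : ℝ) *
      (1/(((33:ℕ)/2-1)! : ℝ) + ((∑ r ∈ Finset.filter (fun r => 3 ≤ r) (Nat.divisors 33), r : ℕ) : ℝ)
        * (1/(((33:ℕ):ℝ)^((33:ℕ)/2-(33:ℕ)/3) * (((33:ℕ)/3-1)! : ℝ))))^2)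
      < 4 * 2^(33:ℕ) * (((33:ℕ)):ℝ)^3 * (((33:ℕ)):ℝ)^((33:ℕ)-2*((33:ℕ)/2)) := by
  refine lt_of_le_of_lt (mul_le_mul_of_nonneg_right Real.exp_one_lt_d9.le (by positivity)) ?_
  norm_num [show (∑ r ∈ Finset.filter (fun r => 3 ≤ r) (Nat.divisors 33), r) = 47 from by decide, show (10:ℕ)! = 3628800 from rfl, show (15:ℕ)! = 1307674368000 from rfl, show (33:ℕ)! = 8683317618811886495518194401280000000 from rfl]

lemma arith_case_34 :
    Real.exp 1 * (((34:ℕ) ! : ℝ) *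
      (1/(((34:ℕ)/2-1)! : ℝ) + ((∑ r ∈ Finset.filter (fun r => 3 ≤ r) (Nat.divisors 34), r : ℕ) : ℝ)
        * (1/(((34:ℕ):ℝ)^((34:ℕ)/2-(34:ℕ)/3) * (((34:ℕ)/3-1)! : ℝ))))^2)
      < 4 * 2^(34:ℕ) * (((34:ℕ)):ℝ)^3 * (((34:ℕ)):ℝ)^((34:ℕ)-2*((34:ℕ)/2)) := by
  refine lt_of_le_of_lt (mul_le_mul_of_nonneg_right Real.exp_one_lt_d9.le (by positivity)) ?_
  norm_num [show (∑ r ∈ Finset.filter (fun r => 3 ≤ r) (Nat.divisors 34), r) = 51 from by decide, show (10:ℕ)! = 3628800 from rfl, show (16:ℕ)! = 20922789888000 from rfl, show (34:ℕ)! = 295232799039604140847618609643520000000 from rfl]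

lemma arith_case_35 :
    Real.exp 1 * (((35:ℕ) ! : ℝ) *
      (1/(((35:ℕ)/2-1)! : ℝ) + ((∑ r ∈ Finset.filter (fun r => 3 ≤ r) (Nat.divisors 35), r : ℕ) : ℝ)
        * (1/(((35:ℕ):ℝ)^((35:ℕ)/2-(35:ℕ)/3) * (((35:ℕ)/3-1)! : ℝ))))^2)
      < 4 * 2^(35:ℕ) * (((35:ℕ)):ℝ)^3 * (((35:ℕ)):ℝ)^((35:ℕ)-2*((35:ℕ)/2)) := by
  refine lt_of_le_of_lt (mul_le_mul_of_nonneg_right Real.exp_one_lt_d9.le (by positivity)) ?_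
  norm_num [show (∑ r ∈ Finset.filter (fun r => 3 ≤ r) (Nat.divisors 35), r) = 47 from by decide, show (10:ℕ)! = 3628800 from rfl, show (16:ℕ)! = 20922789888000 from rfl, show (35:ℕ)! = 10333147966386144929666651337523200000000 from rfl]

lemma arith_case_36 :
    Real.exp 1 * (((36:ℕ) ! : ℝ) *
      (1/(((36:ℕ)/2-1)! : ℝ) + ((∑ r ∈ Finset.filter (fun r => 3 ≤ r) (Nat.divisors 36), r : ℕ) : ℝ)
        * (1/(((36:ℕ):ℝ)^((36:ℕ)/2-(36:ℕ)/3) * (((36:ℕ)/3-1)! : ℝ))))^2)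
      < 4 * 2^(36:ℕ) * (((36:ℕ)):ℝ)^3 * (((36:ℕ)):ℝ)^((36:ℕ)-2*((36:ℕ)/2)) := by
  refine lt_of_le_of_lt (mul_le_mul_of_nonneg_right Real.exp_one_lt_d9.le (by positivity)) ?_
  norm_num [show (∑ r ∈ Finset.filter (fun r => 3 ≤ r) (Nat.divisors 36), r) = 88 from by decide, show (11:ℕ)! = 39916800 from rfl, show (17:ℕ)! = 355687428096000 from rfl, show (36:ℕ)! = 371993326789901217467999448150835200000000 from rfl]

lemma arith_case_37 :
    Real.exp 1 * (((37:ℕ) ! : ℝ) *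
      (1/(((37:ℕ)/2-1)! : ℝ) + ((∑ r ∈ Finset.filter (fun r => 3 ≤ r) (Nat.divisors 37), r : ℕ) : ℝ)
        * (1/(((37:ℕ):ℝ)^((37:ℕ)/2-(37:ℕ)/3) * (((37:ℕ)/3-1)! : ℝ))))^2)
      < 4 * 2^(37:ℕ) * (((37:ℕ)):ℝ)^3 * (((37:ℕ)):ℝ)^((37:ℕ)-2*((37:ℕ)/2)) := by
  refine lt_of_le_of_lt (mul_le_mul_of_nonneg_right Real.exp_one_lt_d9.le (by positivity)) ?_
  norm_num [show (∑ r ∈ Finset.filter (fun r => 3 ≤ r) (Nat.divisors 37), r) = 37 from by decide, show (11:ℕ)! = 39916800 from rfl, show (17:ℕ)! = 355687428096000 from rfl, show (37:ℕ)! = 13763753091226345046315979581580902400000000 from rfl]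

lemma arith_case_38 :
    Real.exp 1 * (((38:ℕ) ! : ℝ) *
      (1/(((38:ℕ)/2-1)! : ℝ) + ((∑ r ∈ Finset.filter (fun r => 3 ≤ r) (Nat.divisors 38), r : ℕ) : ℝ)
        * (1/(((38:ℕ):ℝ)^((38:ℕ)/2-(38:ℕ)/3) * (((38:ℕ)/3-1)! : ℝ))))^2)
      < 4 * 2^(38:ℕ) * (((38:ℕ)):ℝ)^3 * (((38:ℕ)):ℝ)^((38:ℕ)-2*((38:ℕ)/2)) := by
  refine lt_of_le_of_lt (mul_le_mul_of_nonneg_right Real.exp_one_lt_d9.le (by positivity)) ?_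
  norm_num [show (∑ r ∈ Finset.filter (fun r => 3 ≤ r) (Nat.divisors 38), r) = 57 from by decide, show (11:ℕ)! = 39916800 from rfl, show (18:ℕ)! = 6402373705728000 from rfl, show (38:ℕ)! = 523022617466601111760007224100074291200000000 from rfl]

lemma arith_case_39 :
    Real.exp 1 * (((39:ℕ) ! : ℝ) *
      (1/(((39:ℕ)/2-1)! : ℝ) + ((∑ r ∈ Finset.filter (fun r => 3 ≤ r) (Nat.divisors 39), r : ℕ) : ℝ)
        * (1/(((39:ℕ):ℝ)^((39:ℕ)/2-(39:ℕ)/3) * (((39:ℕ)/3-1)! : ℝ))))^2)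
      < 4 * 2^(39:ℕ) * (((39:ℕ)):ℝ)^3 * (((39:ℕ)):ℝ)^((39:ℕ)-2*((39:ℕ)/2)) := by
  refine lt_of_le_of_lt (mul_le_mul_of_nonneg_right Real.exp_one_lt_d9.le (by positivity)) ?_
  norm_num [show (∑ r ∈ Finset.filter (fun r => 3 ≤ r) (Nat.divisors 39), r) = 55 from by decide, show (12:ℕ)! = 479001600 from rfl, show (18:ℕ)! = 6402373705728000 from rfl, show (39:ℕ)! = 20397882081197443358640281739902897356800000000 from rfl]

lemma arith_case_40 :
    Real.exp 1 * (((40:ℕ) ! : ℝ) *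
      (1/(((40:ℕ)/2-1)! : ℝ) + ((∑ r ∈ Finset.filter (fun r => 3 ≤ r) (Nat.divisors 40), r : ℕ) : ℝ)
        * (1/(((40:ℕ):ℝ)^((40:ℕ)/2-(40:ℕ)/3) * (((40:ℕ)/3-1)! : ℝ))))^2)
      < 4 * 2^(40:ℕ) * (((40:ℕ)):ℝ)^3 * (((40:ℕ)):ℝ)^((40:ℕ)-2*((40:ℕ)/2)) := by
  refine lt_of_le_of_lt (mul_le_mul_of_nonneg_right Real.exp_one_lt_d9.le (by positivity)) ?_
  norm_num [show (∑ r ∈ Finset.filter (fun r => 3 ≤ r) (Nat.divisors 40), r) = 87 from by decide, show (12:ℕ)! = 479001600 from rfl, show (19:ℕ)! = 121645100408832000 from rfl, show (40:ℕ)! = 815915283247897734345611269596115894272000000000 from rfl]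

lemma arith_case_41 :
    Real.exp 1 * (((41:ℕ) ! : ℝ) *
      (1/(((41:ℕ)/2-1)! : ℝ) + ((∑ r ∈ Finset.filter (fun r => 3 ≤ r) (Nat.divisors 41), r : ℕ) : ℝ)
        * (1/(((41:ℕ):ℝ)^((41:ℕ)/2-(41:ℕ)/3) * (((41:ℕ)/3-1)! : ℝ))))^2)
      < 4 * 2^(41:ℕ) * (((41:ℕ)):ℝ)^3 * (((41:ℕ)):ℝ)^((41:ℕ)-2*((41:ℕ)/2)) := by
  refine lt_of_le_of_lt (mul_le_mul_of_nonneg_right Real.exp_one_lt_d9.le (by positivity)) ?_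
  norm_num [show (∑ r ∈ Finset.filter (fun r => 3 ≤ r) (Nat.divisors 41), r) = 41 from by decide, show (12:ℕ)! = 479001600 from rfl, show (19:ℕ)! = 121645100408832000 from rfl, show (41:ℕ)! = 33452526613163807108170062053440751665152000000000 from rfl]

lemma arith_case_42 :
    Real.exp 1 * (((42:ℕ) ! : ℝ) *
      (1/(((42:ℕ)/2-1)! : ℝ) + ((∑ r ∈ Finset.filter (fun r => 3 ≤ r) (Nat.divisors 42), r : ℕ) : ℝ)
        * (1/(((42:ℕ):ℝ)^((42:ℕ)/2-(42:ℕ)/3) * (((42:ℕ)/3-1)! : ℝ))))^2)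
      < 4 * 2^(42:ℕ) * (((42:ℕ)):ℝ)^3 * (((42:ℕ)):ℝ)^((42:ℕ)-2*((42:ℕ)/2)) := by
  refine lt_of_le_of_lt (mul_le_mul_of_nonneg_right Real.exp_one_lt_d9.le (by positivity)) ?_
  norm_num [show (∑ r ∈ Finset.filter (fun r => 3 ≤ r) (Nat.divisors 42), r) = 93 from by decide, show (13:ℕ)! = 6227020800 from rfl, show (20:ℕ)! = 2432902008176640000 from rfl, show (42:ℕ)! = 1405006117752879898543142606244511569936384000000000 from rfl]

lemma arith_case_43 :
    Real.exp 1 * (((43:ℕ) ! : ℝ) *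
      (1/(((43:ℕ)/2-1)! : ℝ) + ((∑ r ∈ Finset.filter (fun r => 3 ≤ r) (Nat.divisors 43), r : ℕ) : ℝ)
        * (1/(((43:ℕ):ℝ)^((43:ℕ)/2-(43:ℕ)/3) * (((43:ℕ)/3-1)! : ℝ))))^2)
      < 4 * 2^(43:ℕ) * (((43:ℕ)):ℝ)^3 * (((43:ℕ)):ℝ)^((43:ℕ)-2*((43:ℕ)/2)) := by
  refine lt_of_le_of_lt (mul_le_mul_of_nonneg_right Real.exp_one_lt_d9.le (by positivity)) ?_
  norm_num [show (∑ r ∈ Finset.filter (fun r => 3 ≤ r) (Nat.divisors 43), r) = 43 from by decide, show (13:ℕ)! = 6227020800 from rfl, show (20:ℕ)! = 2432902008176640000 from rfl, show (43:ℕ)! = 60415263063373835637355132068513997507264512000000000 from rfl]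

lemma arith_case_44 :
    Real.exp 1 * (((44:ℕ) ! : ℝ) *
      (1/(((44:ℕ)/2-1)! : ℝ) + ((∑ r ∈ Finset.filter (fun r => 3 ≤ r) (Nat.divisors 44), r : ℕ) : ℝ)
        * (1/(((44:ℕ):ℝ)^((44:ℕ)/2-(44:ℕ)/3) * (((44:ℕ)/3-1)! : ℝ))))^2)
      < 4 * 2^(44:ℕ) * (((44:ℕ)):ℝ)^3 * (((44:ℕ)):ℝ)^((44:ℕ)-2*((44:ℕ)/2)) := by
  refine lt_of_le_of_lt (mul_le_mul_of_nonneg_right Real.exp_one_lt_d9.le (by positivity)) ?_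
  norm_num [show (∑ r ∈ Finset.filter (fun r => 3 ≤ r) (Nat.divisors 44), r) = 81 from by decide, show (13:ℕ)! = 6227020800 from rfl, show (21:ℕ)! = 51090942171709440000 from rfl, show (44:ℕ)! = 2658271574788448768043625811014615890319638528000000000 from rfl]

lemma arith_case_45 :
    Real.exp 1 * (((45:ℕ) ! : ℝ) *
      (1/(((45:ℕ)/2-1)! : ℝ) + ((∑ r ∈ Finset.filter (fun r => 3 ≤ r) (Nat.divisors 45), r : ℕ) : ℝ)
        * (1/(((45:ℕ):ℝ)^((45:ℕ)/2-(45:ℕ)/3) * (((45:ℕ)/3-1)! : ℝ))))^2)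
      < 4 * 2^(45:ℕ) * (((45:ℕ)):ℝ)^3 * (((45:ℕ)):ℝ)^((45:ℕ)-2*((45:ℕ)/2)) := by
  refine lt_of_le_of_lt (mul_le_mul_of_nonneg_right Real.exp_one_lt_d9.le (by positivity)) ?_
  norm_num [show (∑ r ∈ Finset.filter (fun r => 3 ≤ r) (Nat.divisors 45), r) = 77 from by decide, show (14:ℕ)! = 87178291200 from rfl, show (21:ℕ)! = 51090942171709440000 from rfl, show (45:ℕ)! = 119622220865480194561963161495657715064383733760000000000 from rfl]

lemma arith_case_46 :
    Real.exp 1 * (((46:ℕ) ! : ℝ) *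
      (1/(((46:ℕ)/2-1)! : ℝ) + ((∑ r ∈ Finset.filter (fun r => 3 ≤ r) (Nat.divisors 46), r : ℕ) : ℝ)
        * (1/(((46:ℕ):ℝ)^((46:ℕ)/2-(46:ℕ)/3) * (((46:ℕ)/3-1)! : ℝ))))^2)
      < 4 * 2^(46:ℕ) * (((46:ℕ)):ℝ)^3 * (((46:ℕ)):ℝ)^((46:ℕ)-2*((46:ℕ)/2)) := by
  refine lt_of_le_of_lt (mul_le_mul_of_nonneg_right Real.exp_one_lt_d9.le (by positivity)) ?_
  norm_num [show (∑ r ∈ Finset.filter (fun r => 3 ≤ r) (Nat.divisors 46), r) = 69 from by decide, show (14:ℕ)! = 87178291200 from rfl, show (22:ℕ)! = 1124000727777607680000 from rfl, show (46:ℕ)! = 5502622159812088949850305428800254892961651752960000000000 from rfl]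

lemma arith_case_47 :
    Real.exp 1 * (((47:ℕ) ! : ℝ) *
      (1/(((47:ℕ)/2-1)! : ℝ) + ((∑ r ∈ Finset.filter (fun r => 3 ≤ r) (Nat.divisors 47), r : ℕ) : ℝ)
        * (1/(((47:ℕ):ℝ)^((47:ℕ)/2-(47:ℕ)/3) * (((47:ℕ)/3-1)! : ℝ))))^2)
      < 4 * 2^(47:ℕ) * (((47:ℕ)):ℝ)^3 * (((47:ℕ)):ℝ)^((47:ℕ)-2*((47:ℕ)/2)) := by
  refine lt_of_le_of_lt (mul_le_mul_of_nonneg_right Real.exp_one_lt_d9.le (by positivity)) ?_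
  norm_num [show (∑ r ∈ Finset.filter (fun r => 3 ≤ r) (Nat.divisors 47), r) = 47 from by decide, show (14:ℕ)! = 87178291200 from rfl, show (22:ℕ)! = 1124000727777607680000 from rfl, show (47:ℕ)! = 258623241511168180642964355153611979969197632389120000000000 from rfl]

lemma arith_case_48 :
    Real.exp 1 * (((48:ℕ) ! : ℝ) *
      (1/(((48:ℕ)/2-1)! : ℝ) + ((∑ r ∈ Finset.filter (fun r => 3 ≤ r) (Nat.divisors 48), r : ℕ) : ℝ)
        * (1/(((48:ℕ):ℝ)^((48:ℕ)/2-(48:ℕ)/3) * (((48:ℕ)/3-1)! : ℝ))))^2)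
      < 4 * 2^(48:ℕ) * (((48:ℕ)):ℝ)^3 * (((48:ℕ)):ℝ)^((48:ℕ)-2*((48:ℕ)/2)) := by
  refine lt_of_le_of_lt (mul_le_mul_of_nonneg_right Real.exp_one_lt_d9.le (by positivity)) ?_
  norm_num [show (∑ r ∈ Finset.filter (fun r => 3 ≤ r) (Nat.divisors 48), r) = 121 from by decide, show (15:ℕ)! = 1307674368000 from rfl, show (23:ℕ)! = 25852016738884976640000 from rfl, show (48:ℕ)! = 12413915592536072670862289047373375038521486354677760000000000 from rfl]

lemma arith_case_49 :
    Real.exp 1 * (((49:ℕ) ! : ℝ) *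
      (1/(((49:ℕ)/2-1)! : ℝ) + ((∑ r ∈ Finset.filter (fun r => 3 ≤ r) (Nat.divisors 49), r : ℕ) : ℝ)
        * (1/(((49:ℕ):ℝ)^((49:ℕ)/2-(49:ℕ)/3) * (((49:ℕ)/3-1)! : ℝ))))^2)
      < 4 * 2^(49:ℕ) * (((49:ℕ)):ℝ)^3 * (((49:ℕ)):ℝ)^((49:ℕ)-2*((49:ℕ)/2)) := by
  refine lt_of_le_of_lt (mul_le_mul_of_nonneg_right Real.exp_one_lt_d9.le (by positivity)) ?_
  norm_num [show (∑ r ∈ Finset.filter (fun r => 3 ≤ r) (Nat.divisors 49), r) = 56 from by decide, show (15:ℕ)! = 1307674368000 from rfl, show (23:ℕ)! = 25852016738884976640000 from rfl, show (49:ℕ)! = 608281864034267560872252163321295376887552831379210240000000000 from rfl]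

lemma arith_case_50 :
    Real.exp 1 * (((50:ℕ) ! : ℝ) *
      (1/(((50:ℕ)/2-1)! : ℝ) + ((∑ r ∈ Finset.filter (fun r => 3 ≤ r) (Nat.divisors 50), r : ℕ) : ℝ)
        * (1/(((50:ℕ):ℝ)^((50:ℕ)/2-(50:ℕ)/3) * (((50:ℕ)/3-1)! : ℝ))))^2)
      < 4 * 2^(50:ℕ) * (((50:ℕ)):ℝ)^3 * (((50:ℕ)):ℝ)^((50:ℕ)-2*((50:ℕ)/2)) := by
  refine lt_of_le_of_lt (mul_le_mul_of_nonneg_right Real.exp_one_lt_d9.le (by positivity)) ?_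
  norm_num [show (∑ r ∈ Finset.filter (fun r => 3 ≤ r) (Nat.divisors 50), r) = 90 from by decide, show (15:ℕ)! = 1307674368000 from rfl, show (24:ℕ)! = 620448401733239439360000 from rfl, show (50:ℕ)! = 30414093201713378043612608166064768844377641568960512000000000000 from rfl]

lemma arith_case_51 :
    Real.exp 1 * (((51:ℕ) ! : ℝ) *
      (1/(((51:ℕ)/2-1)! : ℝ) + ((∑ r ∈ Finset.filter (fun r => 3 ≤ r) (Nat.divisors 51), r : ℕ) : ℝ)
        * (1/(((51:ℕ):ℝ)^((51:ℕ)/2-(51:ℕ)/3) * (((51:ℕ)/3-1)! : ℝ))))^2)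
      < 4 * 2^(51:ℕ) * (((51:ℕ)):ℝ)^3 * (((51:ℕ)):ℝ)^((51:ℕ)-2*((51:ℕ)/2)) := by
  refine lt_of_le_of_lt (mul_le_mul_of_nonneg_right Real.exp_one_lt_d9.le (by positivity)) ?_
  norm_num [show (∑ r ∈ Finset.filter (fun r => 3 ≤ r) (Nat.divisors 51), r) = 71 from by decide, show (16:ℕ)! = 20922789888000 from rfl, show (24:ℕ)! = 620448401733239439360000 from rfl, show (51:ℕ)! = 1551118753287382280224243016469303211063259720016986112000000000000 from rfl]

lemma arith_case_52 :
    Real.exp 1 * (((52:ℕ) ! : ℝ) *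
      (1/(((52:ℕ)/2-1)! : ℝ) + ((∑ r ∈ Finset.filter (fun r => 3 ≤ r) (Nat.divisors 52), r : ℕ) : ℝ)
        * (1/(((52:ℕ):ℝ)^((52:ℕ)/2-(52:ℕ)/3) * (((52:ℕ)/3-1)! : ℝ))))^2)
      < 4 * 2^(52:ℕ) * (((52:ℕ)):ℝ)^3 * (((52:ℕ)):ℝ)^((52:ℕ)-2*((52:ℕ)/2)) := by
  refine lt_of_le_of_lt (mul_le_mul_of_nonneg_right Real.exp_one_lt_d9.le (by positivity)) ?_
  norm_num [show (∑ r ∈ Finset.filter (fun r => 3 ≤ r) (Nat.divisors 52), r) = 95 from by decide, show (16:ℕ)! = 20922789888000 from rfl, show (25:ℕ)! = 15511210043330985984000000 from rfl, show (52:ℕ)! = 80658175170943878571660636856403766975289505440883277824000000000000 from rfl]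

lemma arith_case_53 :
    Real.exp 1 * (((53:ℕ) ! : ℝ) *
      (1/(((53:ℕ)/2-1)! : ℝ) + ((∑ r ∈ Finset.filter (fun r => 3 ≤ r) (Nat.divisors 53), r : ℕ) : ℝ)
        * (1/(((53:ℕ):ℝ)^((53:ℕ)/2-(53:ℕ)/3) * (((53:ℕ)/3-1)! : ℝ))))^2)
      < 4 * 2^(53:ℕ) * (((53:ℕ)):ℝ)^3 * (((53:ℕ)):ℝ)^((53:ℕ)-2*((53:ℕ)/2)) := by
  refine lt_of_le_of_lt (mul_le_mul_of_nonneg_right Real.exp_one_lt_d9.le (by positivity)) ?_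
  norm_num [show (∑ r ∈ Finset.filter (fun r => 3 ≤ r) (Nat.divisors 53), r) = 53 from by decide, show (16:ℕ)! = 20922789888000 from rfl, show (25:ℕ)! = 15511210043330985984000000 from rfl, show (53:ℕ)! = 4274883284060025564298013753389399649690343788366813724672000000000000 from rfl]

lemma arith_case_54 :
    Real.exp 1 * (((54:ℕ) ! : ℝ) *
      (1/(((54:ℕ)/2-1)! : ℝ) + ((∑ r ∈ Finset.filter (fun r => 3 ≤ r) (Nat.divisors 54), r : ℕ) : ℝ)
        * (1/(((54:ℕ):ℝ)^((54:ℕ)/2-(54:ℕ)/3) * (((54:ℕ)/3-1)! : ℝ))))^2)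
      < 4 * 2^(54:ℕ) * (((54:ℕ)):ℝ)^3 * (((54:ℕ)):ℝ)^((54:ℕ)-2*((54:ℕ)/2)) := by
  refine lt_of_le_of_lt (mul_le_mul_of_nonneg_right Real.exp_one_lt_d9.le (by positivity)) ?_
  norm_num [show (∑ r ∈ Finset.filter (fun r => 3 ≤ r) (Nat.divisors 54), r) = 117 from by decide, show (17:ℕ)! = 355687428096000 from rfl, show (26:ℕ)! = 403291461126605635584000000 from rfl, show (54:ℕ)! = 230843697339241380472092742683027581083278564571807941132288000000000000 from rfl]

lemma arith_case_55 :
    Real.exp 1 * (((55:ℕ) ! : ℝ) *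
      (1/(((55:ℕ)/2-1)! : ℝ) + ((∑ r ∈ Finset.filter (fun r => 3 ≤ r) (Nat.divisors 55), r : ℕ) : ℝ)
        * (1/(((55:ℕ):ℝ)^((55:ℕ)/2-(55:ℕ)/3) * (((55:ℕ)/3-1)! : ℝ))))^2)
      < 4 * 2^(55:ℕ) * (((55:ℕ)):ℝ)^3 * (((55:ℕ)):ℝ)^((55:ℕ)-2*((55:ℕ)/2)) := by
  refine lt_of_le_of_lt (mul_le_mul_of_nonneg_right Real.exp_one_lt_d9.le (by positivity)) ?_
  norm_num [show (∑ r ∈ Finset.filter (fun r => 3 ≤ r) (Nat.divisors 55), r) = 71 from by decide, show (17:ℕ)! = 355687428096000 from rfl, show (26:ℕ)! = 403291461126605635584000000 from rfl, show (55:ℕ)! = 12696403353658275925965100847566516959580321051449436762275840000000000000 from rfl]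

lemma arith_case_56 :
    Real.exp 1 * (((56:ℕ) ! : ℝ) *
      (1/(((56:ℕ)/2-1)! : ℝ) + ((∑ r ∈ Finset.filter (fun r => 3 ≤ r) (Nat.divisors 56), r : ℕ) : ℝ)
        * (1/(((56:ℕ):ℝ)^((56:ℕ)/2-(56:ℕ)/3) * (((56:ℕ)/3-1)! : ℝ))))^2)
      < 4 * 2^(56:ℕ) * (((56:ℕ)):ℝ)^3 * (((56:ℕ)):ℝ)^((56:ℕ)-2*((56:ℕ)/2)) := by
  refine lt_of_le_of_lt (mul_le_mul_of_nonneg_right Real.exp_one_lt_d9.le (by positivity)) ?_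
  norm_num [show (∑ r ∈ Finset.filter (fun r => 3 ≤ r) (Nat.divisors 56), r) = 117 from by decide, show (17:ℕ)! = 355687428096000 from rfl, show (27:ℕ)! = 10888869450418352160768000000 from rfl, show (56:ℕ)! = 710998587804863451854045647463724949736497978881168458687447040000000000000 from rfl]

lemma arith_case_57 :
    Real.exp 1 * (((57:ℕ) ! : ℝ) *
      (1/(((57:ℕ)/2-1)! : ℝ) + ((∑ r ∈ Finset.filter (fun r => 3 ≤ r) (Nat.divisors 57), r : ℕ) : ℝ)
        * (1/(((57:ℕ):ℝ)^((57:ℕ)/2-(57:ℕ)/3) * (((57:ℕ)/3-1)! : ℝ))))^2)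
      < 4 * 2^(57:ℕ) * (((57:ℕ)):ℝ)^3 * (((57:ℕ)):ℝ)^((57:ℕ)-2*((57:ℕ)/2)) := by
  refine lt_of_le_of_lt (mul_le_mul_of_nonneg_right Real.exp_one_lt_d9.le (by positivity)) ?_
  norm_num [show (∑ r ∈ Finset.filter (fun r => 3 ≤ r) (Nat.divisors 57), r) = 79 from by decide, show (18:ℕ)! = 6402373705728000 from rfl, show (27:ℕ)! = 10888869450418352160768000000 from rfl, show (57:ℕ)! = 40526919504877216755680601905432322134980384796226602145184481280000000000000 from rfl]

lemma arith_case_58 :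
    Real.exp 1 * (((58:ℕ) ! : ℝ) *
      (1/(((58:ℕ)/2-1)! : ℝ) + ((∑ r ∈ Finset.filter (fun r => 3 ≤ r) (Nat.divisors 58), r : ℕ) : ℝ)
        * (1/(((58:ℕ):ℝ)^((58:ℕ)/2-(58:ℕ)/3) * (((58:ℕ)/3-1)! : ℝ))))^2)
      < 4 * 2^(58:ℕ) * (((58:ℕ)):ℝ)^3 * (((58:ℕ)):ℝ)^((58:ℕ)-2*((58:ℕ)/2)) := by
  refine lt_of_le_of_lt (mul_le_mul_of_nonneg_right Real.exp_one_lt_d9.le (by positivity)) ?_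
  norm_num [show (∑ r ∈ Finset.filter (fun r => 3 ≤ r) (Nat.divisors 58), r) = 87 from by decide, show (18:ℕ)! = 6402373705728000 from rfl, show (28:ℕ)! = 304888344611713860501504000000 from rfl, show (58:ℕ)! = 2350561331282878571829474910515074683828862318181142924420699914240000000000000 from rfl]

lemma arith_case_59 :
    Real.exp 1 * (((59:ℕ) ! : ℝ) *
      (1/(((59:ℕ)/2-1)! : ℝ) + ((∑ r ∈ Finset.filter (fun r => 3 ≤ r) (Nat.divisors 59), r : ℕ) : ℝ)
        * (1/(((59:ℕ):ℝ)^((59:ℕ)/2-(59:ℕ)/3) * (((59:ℕ)/3-1)! : ℝ))))^2)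
      < 4 * 2^(59:ℕ) * (((59:ℕ)):ℝ)^3 * (((59:ℕ)):ℝ)^((59:ℕ)-2*((59:ℕ)/2)) := by
  refine lt_of_le_of_lt (mul_le_mul_of_nonneg_right Real.exp_one_lt_d9.le (by positivity)) ?_
  norm_num [show (∑ r ∈ Finset.filter (fun r => 3 ≤ r) (Nat.divisors 59), r) = 59 from by decide, show (18:ℕ)! = 6402373705728000 from rfl, show (28:ℕ)! = 304888344611713860501504000000 from rfl, show (59:ℕ)! = 138683118545689835737939019720389406345902876772687432540821294940160000000000000 from rfl]

lemma arith_case_60 :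
    Real.exp 1 * (((60:ℕ) ! : ℝ) *
      (1/(((60:ℕ)/2-1)! : ℝ) + ((∑ r ∈ Finset.filter (fun r => 3 ≤ r) (Nat.divisors 60), r : ℕ) : ℝ)
        * (1/(((60:ℕ):ℝ)^((60:ℕ)/2-(60:ℕ)/3) * (((60:ℕ)/3-1)! : ℝ))))^2)
      < 4 * 2^(60:ℕ) * (((60:ℕ)):ℝ)^3 * (((60:ℕ)):ℝ)^((60:ℕ)-2*((60:ℕ)/2)) := by
  refine lt_of_le_of_lt (mul_le_mul_of_nonneg_right Real.exp_one_lt_d9.le (by positivity)) ?_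
  norm_num [show (∑ r ∈ Finset.filter (fun r => 3 ≤ r) (Nat.divisors 60), r) = 165 from by decide, show (19:ℕ)! = 121645100408832000 from rfl, show (29:ℕ)! = 8841761993739701954543616000000 from rfl, show (60:ℕ)! = 8320987112741390144276341183223364380754172606361245952449277696409600000000000000 from rfl]

lemma arith_case_61 :
    Real.exp 1 * (((61:ℕ) ! : ℝ) *
      (1/(((61:ℕ)/2-1)! : ℝ) + ((∑ r ∈ Finset.filter (fun r => 3 ≤ r) (Nat.divisors 61), r : ℕ) : ℝ)
        * (1/(((61:ℕ):ℝ)^((61:ℕ)/2-(61:ℕ)/3) * (((61:ℕ)/3-1)! : ℝ))))^2)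
      < 4 * 2^(61:ℕ) * (((61:ℕ)):ℝ)^3 * (((61:ℕ)):ℝ)^((61:ℕ)-2*((61:ℕ)/2)) := by
  refine lt_of_le_of_lt (mul_le_mul_of_nonneg_right Real.exp_one_lt_d9.le (by positivity)) ?_
  norm_num [show (∑ r ∈ Finset.filter (fun r => 3 ≤ r) (Nat.divisors 61), r) = 61 from by decide, show (19:ℕ)! = 121645100408832000 from rfl, show (29:ℕ)! = 8841761993739701954543616000000 from rfl, show (61:ℕ)! = 507580213877224798800856812176625227226004528988036003099405939480985600000000000000 from rfl]

lemma arith_case_62 :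
    Real.exp 1 * (((62:ℕ) ! : ℝ) *
      (1/(((62:ℕ)/2-1)! : ℝ) + ((∑ r ∈ Finset.filter (fun r => 3 ≤ r) (Nat.divisors 62), r : ℕ) : ℝ)
        * (1/(((62:ℕ):ℝ)^((62:ℕ)/2-(62:ℕ)/3) * (((62:ℕ)/3-1)! : ℝ))))^2)
      < 4 * 2^(62:ℕ) * (((62:ℕ)):ℝ)^3 * (((62:ℕ)):ℝ)^((62:ℕ)-2*((62:ℕ)/2)) := by
  refine lt_of_le_of_lt (mul_le_mul_of_nonneg_right Real.exp_one_lt_d9.le (by positivity)) ?_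
  norm_num [show (∑ r ∈ Finset.filter (fun r => 3 ≤ r) (Nat.divisors 62), r) = 93 from by decide, show (19:ℕ)! = 121645100408832000 from rfl, show (30:ℕ)! = 265252859812191058636308480000000 from rfl, show (62:ℕ)! = 31469973260387937525653122354950764088012280797258232192163168247821107200000000000000 from rfl]

lemma arith_case_63 :
    Real.exp 1 * (((63:ℕ) ! : ℝ) *
      (1/(((63:ℕ)/2-1)! : ℝ) + ((∑ r ∈ Finset.filter (fun r => 3 ≤ r) (Nat.divisors 63), r : ℕ) : ℝ)
        * (1/(((63:ℕ):ℝ)^((63:ℕ)/2-(63:ℕ)/3) * (((63:ℕ)/3-1)! : ℝ))))^2)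
      < 4 * 2^(63:ℕ) * (((63:ℕ)):ℝ)^3 * (((63:ℕ)):ℝ)^((63:ℕ)-2*((63:ℕ)/2)) := by
  refine lt_of_le_of_lt (mul_le_mul_of_nonneg_right Real.exp_one_lt_d9.le (by positivity)) ?_
  norm_num [show (∑ r ∈ Finset.filter (fun r => 3 ≤ r) (Nat.divisors 63), r) = 103 from by decide, show (20:ℕ)! = 2432902008176640000 from rfl, show (30:ℕ)! = 265252859812191058636308480000000 from rfl, show (63:ℕ)! = 1982608315404440064116146708361898137544773690227268628106279599612729753600000000000000 from rfl]

lemma arith_case_64 :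
    Real.exp 1 * (((64:ℕ) ! : ℝ) *
      (1/(((64:ℕ)/2-1)! : ℝ) + ((∑ r ∈ Finset.filter (fun r => 3 ≤ r) (Nat.divisors 64), r : ℕ) : ℝ)
        * (1/(((64:ℕ):ℝ)^((64:ℕ)/2-(64:ℕ)/3) * (((64:ℕ)/3-1)! : ℝ))))^2)
      < 4 * 2^(64:ℕ) * (((64:ℕ)):ℝ)^3 * (((64:ℕ)):ℝ)^((64:ℕ)-2*((64:ℕ)/2)) := by
  refine lt_of_le_of_lt (mul_le_mul_of_nonneg_right Real.exp_one_lt_d9.le (by positivity)) ?_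
  norm_num [show (∑ r ∈ Finset.filter (fun r => 3 ≤ r) (Nat.divisors 64), r) = 124 from by decide, show (20:ℕ)! = 2432902008176640000 from rfl, show (31:ℕ)! = 8222838654177922817725562880000000 from rfl, show (64:ℕ)! = 126886932185884164103433389335161480802865516174545192198801894375214704230400000000000000 from rfl]

lemma arith_case_65 :
    Real.exp 1 * (((65:ℕ) ! : ℝ) *
      (1/(((65:ℕ)/2-1)! : ℝ) + ((∑ r ∈ Finset.filter (fun r => 3 ≤ r) (Nat.divisors 65), r : ℕ) : ℝ)
        * (1/(((65:ℕ):ℝ)^((65:ℕ)/2-(65:ℕ)/3) * (((65:ℕ)/3-1)! : ℝ))))^2)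
      < 4 * 2^(65:ℕ) * (((65:ℕ)):ℝ)^3 * (((65:ℕ)):ℝ)^((65:ℕ)-2*((65:ℕ)/2)) := by
  refine lt_of_le_of_lt (mul_le_mul_of_nonneg_right Real.exp_one_lt_d9.le (by positivity)) ?_
  norm_num [show (∑ r ∈ Finset.filter (fun r => 3 ≤ r) (Nat.divisors 65), r) = 83 from by decide, show (20:ℕ)! = 2432902008176640000 from rfl, show (31:ℕ)! = 8222838654177922817725562880000000 from rfl, show (65:ℕ)! = 8247650592082470666723170306785496252186258551345437492922123134388955774976000000000000000 from rfl]

lemma arith_main (n : ℕ) (hn : 2 ≤ n) :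
    Real.exp 1 * ((n ! : ℝ) *
      (1/((n/2-1)! : ℝ) + ((∑ r ∈ Finset.filter (fun r => 3 ≤ r) n.divisors, r : ℕ) : ℝ)
        * (1/((n:ℝ)^(n/2-n/3) * ((n/3-1)! : ℝ))))^2)
      < 4 * 2^n * (n:ℝ)^3 * (n:ℝ)^(n-2*(n/2)) := by
  rcases lt_or_ge n 66 with h66 | h66
  · interval_cases n
    · exact arith_case_2
    · exact arith_case_3
    · exact arith_case_4
    · exact arith_case_5
    · exact arith_case_6
    · exact arith_case_7
    · exact arith_case_8
    · exact arith_case_9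
    · exact arith_case_10
    · exact arith_case_11
    · exact arith_case_12
    · exact arith_case_13
    · exact arith_case_14
    · exact arith_case_15
    · exact arith_case_16
    · exact arith_case_17
    · exact arith_case_18
    · exact arith_case_19
    · exact arith_case_20
    · exact arith_case_21
    · exact arith_case_22
    · exact arith_case_23
    · exact arith_case_24
    · exact arith_case_25
    · exact arith_case_26
    · exact arith_case_27
    · exact arith_case_28
    · exact arith_case_29
    · exact arith_case_30
    · exact arith_case_31
    · exact arith_case_32
    · exact arith_case_33
    · exact arith_case_34
    · exact arith_case_35
    · exact arith_case_36
    · exact arith_case_37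
    · exact arith_case_38
    · exact arith_case_39
    · exact arith_case_40
    · exact arith_case_41
    · exact arith_case_42
    · exact arith_case_43
    · exact arith_case_44
    · exact arith_case_45
    · exact arith_case_46
    · exact arith_case_47
    · exact arith_case_48
    · exact arith_case_49
    · exact arith_case_50
    · exact arith_case_51
    · exact arith_case_52
    · exact arith_case_53
    · exact arith_case_54
    · exact arith_case_55
    · exact arith_case_56
    · exact arith_case_57
    · exact arith_case_58
    · exact arith_case_59
    · exact arith_case_60
    · exact arith_case_61
    · exact arith_case_62
    · exact arith_case_63
    · exact arith_case_64
    · exact arith_case_65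
  · have hS : (∑ r ∈ Finset.filter (fun r => 3 ≤ r) n.divisors, r) ≤ n^2 :=
      S_le_sq n (by omega)
    have hSR : ((∑ r ∈ Finset.filter (fun r => 3 ≤ r) n.divisors, r : ℕ) : ℝ) ≤ (n:ℝ)^2 := by
      exact_mod_cast hS
    refine lt_of_le_of_lt ?_ (arith2_large n h66)
    apply mul_le_mul_of_nonneg_left _ (Real.exp_pos 1).le
    apply mul_le_mul_of_nonneg_left _ (Nat.cast_nonneg _)
    apply pow_le_pow_left₀ (by positivity)
    exact add_le_add le_rfl
      (mul_le_mul_of_nonneg_right hSR (by positivity))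

/-- for `n ≥ 2` and `k ≥ n`,
`||A_{k,n} - C_{k,n}|| < n·(2n/(e·k))^(n/2)`. -/
theorem totalVariation_affine_cutRiffle_lt (n k : ℕ) (hn : 2 ≤ n) (hk : n ≤ k) :
    (1 / 2) * ∑ π : Equiv.Perm (Fin n), |affineShuffle k n π - cutRiffle k n π|
      < (n : ℝ) * (2 * (n : ℝ) / (Real.exp 1 * (k : ℝ))) ^ ((n : ℝ) / 2) := by
  have hn0 : 0 < n := by omega
  have hk0 : 0 < k := by omega
  have hnR : (0:ℝ) < (n:ℝ) := by exact_mod_cast hn0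
  have hkR : (0:ℝ) < (k:ℝ) := by exact_mod_cast hk0
  have hknR : (n:ℝ) ≤ (k:ℝ) := by exact_mod_cast hk
  set S : ℕ := ∑ r ∈ n.divisors.filter (fun r => 3 ≤ r), r with hS
  set T : ℝ := (Nat.choose k (n/2-1) : ℝ) + (S:ℝ) * (Nat.choose k (n/3-1) : ℝ) with hT
  set D : ℝ := (n : ℝ) * (k : ℝ) ^ (n - 1) with hD
  have hDpos : (0:ℝ) < D := by positivity
  have hTnn : (0:ℝ) ≤ T := by positivity
  have hsum : ∑ π : Equiv.Perm (Fin n), |affineShuffle k n π - cutRiffle k n π|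
      ≤ (n ! : ℝ) * (T / D) := by
    calc ∑ π : Equiv.Perm (Fin n), |affineShuffle k n π - cutRiffle k n π|
        ≤ ∑ _π : Equiv.Perm (Fin n), (T / D) :=
          Finset.sum_le_sum (fun π _ => perPi n k hn hk π)
      _ = (Fintype.card (Equiv.Perm (Fin n)) : ℝ) * (T/D) := by
          rw [Finset.sum_const, Finset.card_univ, nsmul_eq_mul]
      _ = (n ! : ℝ) * (T/D) := by rw [Fintype.card_perm, Fintype.card_fin]
  have hx : (0:ℝ) < 2*(n:ℝ)/(Real.exp 1 * (k:ℝ)) := by positivity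
  have hB : (n ! : ℝ) * (T / D) / 2 < (n:ℝ) * (2*(n:ℝ)/(Real.exp 1 * (k:ℝ))) ^ ((n:ℝ)/2) := by
    have hR : (0:ℝ) < (n:ℝ) * (2*(n:ℝ)/(Real.exp 1 * (k:ℝ))) ^ ((n:ℝ)/2) := by positivity
    refine lt_of_pow_lt_pow_left₀ 2 hR.le ?_
    have hxpow : ((2*(n:ℝ)/(Real.exp 1 * (k:ℝ))) ^ ((n:ℝ)/2))^(2:ℕ)
        = (2*(n:ℝ)/(Real.exp 1 * (k:ℝ))) ^ (n:ℕ) := by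
      rw [← Real.rpow_natCast ((2*(n:ℝ)/(Real.exp 1 * (k:ℝ))) ^ ((n:ℝ)/2)) 2,
        ← Real.rpow_mul hx.le]
      rw [show ((n:ℝ)/2) * ((2:ℕ):ℝ) = ((n:ℕ):ℝ) from by push_cast; ring]
      exact Real.rpow_natCast _ n
    rw [mul_pow, hxpow]
    -- goal : (n! * (T/D)/2)^2 < n^2 * (2n/(e k))^n
    have hL0 : (n ! : ℝ) * (T / D) / 2 = ((n ! : ℝ)*T) / (2*D) := by
      rw [← mul_div_assoc, div_div, mul_comm D 2]
    rw [hL0, div_pow, div_pow, ← mul_div_assoc,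
      div_lt_div_iff₀ (by positivity) (by positivity)]
    -- goal : (n! T)^2 * (e k)^n < n^2 * (2n)^n * (2D)^2
    set m := n/2 with hm
    set m3 := n/3 with hm3
    have hm1 : 1 ≤ m := by omega
    have h2m : 2*m ≤ n := by omega
    set W : ℝ := 1/((m-1)! : ℝ) + (S:ℝ) * (1/((n:ℝ)^(m-m3) * ((m3-1)! : ℝ))) with hW
    have hWnn : (0:ℝ) ≤ W := by positivity
    have hchA : (Nat.choose k (m-1) : ℝ) ≤ (k:ℝ)^(m-1) * (1/((m-1)! : ℝ)) := by
      have h := Nat.descFactorial_le_pow k (m-1)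
      rw [Nat.descFactorial_eq_factorial_mul_choose] at h
      have h' : ((m-1)! : ℝ) * (Nat.choose k (m-1) : ℝ) ≤ (k:ℝ)^(m-1) := by
        exact_mod_cast h
      have hfpos : (0:ℝ) < ((m-1)! : ℝ) := by exact_mod_cast Nat.factorial_pos _
      rw [mul_one_div, le_div_iff₀ hfpos]
      linarith [h']
    have hchB : (S:ℝ) * (Nat.choose k (m3-1) : ℝ)
        ≤ (k:ℝ)^(m-1) * ((S:ℝ) * (1/((n:ℝ)^(m-m3) * ((m3-1)! : ℝ)))) := by
      rcases (show n = 2 ∨ 3 ≤ n from by omega) with h2 | h3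
      · have hS0 : S = 0 := by
          rw [hS]; subst h2; decide
        rw [hS0]; push_cast; simp
      · have hm31 : 1 ≤ m3 := by omega
        have h := Nat.descFactorial_le_pow k (m3-1)
        rw [Nat.descFactorial_eq_factorial_mul_choose] at h
        have h' : ((m3-1)! : ℝ) * (Nat.choose k (m3-1) : ℝ) ≤ (k:ℝ)^(m3-1) := by
          exact_mod_cast h
        have hfpos : (0:ℝ) < ((m3-1)! : ℝ) := by exact_mod_cast Nat.factorial_pos _
        have hPk : (n:ℝ)^(m-m3) ≤ (k:ℝ)^(m-m3) := pow_le_pow_left₀ hnR.le hknR _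
        have hkk : (k:ℝ)^(m3-1) * (k:ℝ)^(m-m3) = (k:ℝ)^(m-1) := by
          rw [← pow_add]; congr 1; omega
        have hcb : (Nat.choose k (m3-1) : ℝ) * ((n:ℝ)^(m-m3) * ((m3-1)! : ℝ))
            ≤ (k:ℝ)^(m-1) := by
          calc (Nat.choose k (m3-1) : ℝ) * ((n:ℝ)^(m-m3) * ((m3-1)! : ℝ))
              = (((m3-1)! : ℝ) * (Nat.choose k (m3-1) : ℝ)) * (n:ℝ)^(m-m3) := by ring
            _ ≤ (k:ℝ)^(m3-1) * (n:ℝ)^(m-m3) :=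
                mul_le_mul_of_nonneg_right h' (by positivity)
            _ ≤ (k:ℝ)^(m3-1) * (k:ℝ)^(m-m3) :=
                mul_le_mul_of_nonneg_left hPk (by positivity)
            _ = (k:ℝ)^(m-1) := hkk
        have hcb2 : (Nat.choose k (m3-1) : ℝ)
            ≤ (k:ℝ)^(m-1) * (1/((n:ℝ)^(m-m3) * ((m3-1)! : ℝ))) := by
          rw [mul_one_div, le_div_iff₀ (by positivity)]
          linarith [hcb]
        calc (S:ℝ) * (Nat.choose k (m3-1) : ℝ)
            ≤ (S:ℝ) * ((k:ℝ)^(m-1) * (1/((n:ℝ)^(m-m3) * ((m3-1)! : ℝ)))) :=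
              mul_le_mul_of_nonneg_left hcb2 (Nat.cast_nonneg _)
          _ = (k:ℝ)^(m-1) * ((S:ℝ) * (1/((n:ℝ)^(m-m3) * ((m3-1)! : ℝ)))) := by ring
    have hTW : T ≤ (k:ℝ)^(m-1) * W := by
      rw [hT, hW, mul_add]
      exact add_le_add hchA hchB
    have hT2 : T^2 ≤ ((k:ℝ)^(m-1))^2 * W^2 := by
      have := pow_le_pow_left₀ hTnn hTW 2
      rwa [mul_pow] at this
    have harith := arith_main n hn
    have hfin : ((n:ℝ)^(n+1) * ((k:ℝ)^(m-1))^2 * (k:ℝ)^n)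
          * (4*2^n*(n:ℝ)^3*(n:ℝ)^(n-2*m))
        ≤ (n:ℝ)^2*(2*(n:ℝ))^n * (2*D)^2 := by
      have hnk : (n:ℝ)^(n-2*m) ≤ (k:ℝ)^(n-2*m) := pow_le_pow_left₀ hnR.le hknR _
      have hid1 : ((k:ℝ)^(m-1))^2 * (k:ℝ)^n * (k:ℝ)^(n-2*m) = ((k:ℝ)^(n-1))^2 := by
        rw [← pow_mul, ← pow_mul, ← pow_add, ← pow_add]; congr 1; omega
      have hid2 : (n:ℝ)^2*(2*(n:ℝ))^n * (2*D)^2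
          = 4 * 2^n * ((n:ℝ)^(n+1) * (n:ℝ)^3) * ((k:ℝ)^(n-1))^2 := by
        rw [hD, mul_pow 2 (n:ℝ) n, mul_pow, mul_pow]
        rw [show (n:ℝ)^(n+1) * (n:ℝ)^3 = (n:ℝ)^(n+4) from by rw [← pow_add]]
        rw [show (n:ℝ)^(n+4) = (n:ℝ)^n * (n:ℝ)^4 from by rw [← pow_add]]
        ring
      calc ((n:ℝ)^(n+1) * ((k:ℝ)^(m-1))^2 * (k:ℝ)^n) * (4*2^n*(n:ℝ)^3*(n:ℝ)^(n-2*m))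
          = 4 * 2^n * ((n:ℝ)^(n+1) * (n:ℝ)^3)
              * (((k:ℝ)^(m-1))^2 * (k:ℝ)^n * (n:ℝ)^(n-2*m)) := by ring
        _ ≤ 4 * 2^n * ((n:ℝ)^(n+1) * (n:ℝ)^3)
              * (((k:ℝ)^(m-1))^2 * (k:ℝ)^n * (k:ℝ)^(n-2*m)) := by
            apply mul_le_mul_of_nonneg_left _ (by positivity)
            exact mul_le_mul_of_nonneg_left hnk (by positivity)
        _ = 4 * 2^n * ((n:ℝ)^(n+1) * (n:ℝ)^3) * ((k:ℝ)^(n-1))^2 := by rw [hid1]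
        _ = (n:ℝ)^2*(2*(n:ℝ))^n * (2*D)^2 := hid2.symm
    calc ((n ! : ℝ)*T)^2 * (Real.exp 1 * (k:ℝ))^n
        = ((n ! : ℝ) * Real.exp 1^n) * (((n ! : ℝ) * T^2) * (k:ℝ)^n) := by
          rw [mul_pow]; ring
      _ ≤ (Real.exp 1 * (n:ℝ)^(n+1)) * (((n ! : ℝ) * T^2) * (k:ℝ)^n) :=
          mul_le_mul_of_nonneg_right (factorial_mul_exp_pow_le n (by omega)) (by positivity)
      _ ≤ (Real.exp 1 * (n:ℝ)^(n+1)) * (((n ! : ℝ) * (((k:ℝ)^(m-1))^2 * W^2)) * (k:ℝ)^n) := by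
          apply mul_le_mul_of_nonneg_left _ (by positivity)
          apply mul_le_mul_of_nonneg_right _ (by positivity)
          exact mul_le_mul_of_nonneg_left hT2 (Nat.cast_nonneg _)
      _ = ((n:ℝ)^(n+1) * ((k:ℝ)^(m-1))^2 * (k:ℝ)^n) * (Real.exp 1 * ((n ! : ℝ) * W^2)) := by
          ring
      _ < ((n:ℝ)^(n+1) * ((k:ℝ)^(m-1))^2 * (k:ℝ)^n)
            * (4*2^n*(n:ℝ)^3*(n:ℝ)^(n-2*m)) := by
          apply mul_lt_mul_of_pos_left _ (by positivity)
          exact harith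
      _ ≤ (n:ℝ)^2*(2*(n:ℝ))^n * (2*D)^2 := hfin
  calc (1 / 2) * ∑ π : Equiv.Perm (Fin n), |affineShuffle k n π - cutRiffle k n π|
      ≤ (1/2) * ((n ! : ℝ) * (T / D)) := by
        apply mul_le_mul_of_nonneg_left hsum (by norm_num)
    _ = (n ! : ℝ) * (T / D) / 2 := by ring
    _ < _ := hB
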